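/- arXiv:1912.13154 — 6 statements merged into one kernel-verified Lean document; each statement's English description precedes it below -/
import Mathlib

section
/- Let η > 0 be a constant and let [0,T) be the maximal interval of existence of the system state x(t). Suppose the function approximation error f̃ : [0,T) → ℝ satisfies ∫₀ᵀ f̃(t)² dt ≤ C for a constant C independent of T, that the parameter estimate â(t) is bounded on [0,T) by a constant independent of T, and that f̃ is locally bounded in (x, â) uniformly in t. If s(t) = ∫₀ᵗ e^{−η(t−τ)} f̃(τ) dτ (i.e., s solves ṡ = −η s + f̃ with s(0) = 0), then sup_{t∈[0,T)} s(t)² ≤ (1/(2η)) ∫₀ᵀ f̃(τ)² dτ, this bound being independent of T; consequently x(t) remains bounded and exists for all t ≥ 0, â ∈ L∞, f̃ ∈ L², s ∈ L² ∩ L∞, s(t) → 0 as t → ∞, and x(t) → x_d(t). -/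
open MeasureTheory Filter
open scoped ENNReal

noncomputable section

/-- The signal `g` is square-integrable (`L²`) on `[0, ∞)`. -/
def InL2 {F : Type*} [NormedAddCommGroup F] (g : ℝ → F) : Prop :=
  ∫⁻ t in Set.Ici (0 : ℝ), ENNReal.ofReal (‖g t‖ ^ 2) < ⊤

/-- The signal `g` is bounded (`L∞`) on `[0, ∞)`. -/
def InLinf {F : Type*} [NormedAddCommGroup F] (g : ℝ → F) : Prop :=
  ∃ C : ℝ, ∀ t : ℝ, 0 ≤ t → ‖g t‖ ≤ C

section Helpers

open Set Real
open scoped Topology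

lemma my_integral_exp_Ioi {c : ℝ} (hc : 0 < c) (a : ℝ) :
    ∫ x in Set.Ioi a, Real.exp (-c * x) = Real.exp (-c * a) / c := by
  have hd : ∀ x ∈ Ici a, HasDerivAt (fun y => -Real.exp (-c * y) / c) (Real.exp (-c * x)) x := by
    intro x _
    simpa [hc.ne'] using ((hasDerivAt_id x).const_mul (-c)).exp.neg.div_const c
  have ht : Tendsto (fun y => -Real.exp (-c * y) / c) atTop (𝓝 ((-0 : ℝ) / c)) := by
    refine Tendsto.div_const (Tendsto.neg ?_) _
    exact tendsto_exp_atBot.comp (tendsto_id.const_mul_atTop_of_neg (neg_neg_iff_pos.2 hc))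
  have := integral_Ioi_of_hasDerivAt_of_tendsto' hd (exp_neg_integrableOn_Ioi a hc) ht
  rw [this]; field_simp; ring

lemma my_lint_exp_tail {c : ℝ} (hc : 0 < c) (a : ℝ) :
    ∫⁻ t in Set.Ici a, ENNReal.ofReal (Real.exp (-c * (t - a))) = ENNReal.ofReal (1 / c) := by
  rw [← Measure.restrict_congr_set Ioi_ae_eq_Ici]
  have hint : IntegrableOn (fun t => Real.exp (-c * (t - a))) (Set.Ioi a) := by
    have h0 : IntegrableOn (fun x => Real.exp (c * a) * Real.exp (-c * x)) (Set.Ioi a) :=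
      (exp_neg_integrableOn_Ioi a hc).const_mul (Real.exp (c * a))
    apply h0.congr_fun _ measurableSet_Ioi
    intro t _
    show Real.exp (c * a) * Real.exp (-c * t) = Real.exp (-c * (t - a))
    rw [← Real.exp_add]; ring_nf
  rw [← ofReal_integral_eq_lintegral_ofReal hint (ae_of_all _ fun t => (Real.exp_pos _).le)]
  congr 1
  have : ∀ t : ℝ, Real.exp (-c * (t - a)) = Real.exp (c * a) * Real.exp (-c * t) := by
    intro t; rw [← Real.exp_add]; ring_nf
  rw [MeasureTheory.setIntegral_congr_fun measurableSet_Ioi (fun t _ => this t),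
    MeasureTheory.integral_const_mul, my_integral_exp_Ioi hc a, neg_mul, Real.exp_neg]
  field_simp

lemma my_lint_exp_Iic {c : ℝ} (hc : 0 < c) (t : ℝ) :
    ∫⁻ τ in Set.Iic t, ENNReal.ofReal (Real.exp (-c * (t - τ))) = ENNReal.ofReal (1 / c) := by
  have hmp : MeasurePreserving (fun τ : ℝ => t - τ) volume volume :=
    MeasureTheory.Measure.measurePreserving_sub_left volume t
  have hemb : MeasurableEmbedding (fun τ : ℝ => t - τ) :=
    (Homeomorph.subLeft t).measurableEmbedding
  have := hmp.setLIntegral_comp_emb hemb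
    (fun u => ENNReal.ofReal (Real.exp (-c * u))) (Set.Iic t)
  rw [Set.image_const_sub_Iic, sub_self] at this
  rw [this]
  simpa using my_lint_exp_tail hc 0

lemma my_integrableOn_of_sq {f : ℝ → ℝ} (hf : Measurable f) {a b : ℝ}
    (hfin : (∫⁻ τ in Set.Ioc a b, ENNReal.ofReal (f τ ^ 2)) ≠ ⊤) :
    MeasureTheory.IntegrableOn f (Set.Ioc a b) := by
  refine ⟨hf.aestronglyMeasurable, ?_⟩
  rw [hasFiniteIntegral_iff_norm]
  have hb : ∀ τ : ℝ, ENNReal.ofReal ‖f τ‖ ≤ ENNReal.ofReal (f τ ^ 2) + 1 := by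
    intro τ
    rw [← ENNReal.ofReal_one, ← ENNReal.ofReal_add (by positivity) zero_le_one]
    apply ENNReal.ofReal_le_ofReal
    rw [Real.norm_eq_abs]
    nlinarith [sq_nonneg (|f τ| - 1), sq_abs (f τ)]
  calc ∫⁻ τ in Set.Ioc a b, ENNReal.ofReal ‖f τ‖
      ≤ ∫⁻ τ in Set.Ioc a b, (ENNReal.ofReal (f τ ^ 2) + 1) := lintegral_mono hb
    _ = (∫⁻ τ in Set.Ioc a b, ENNReal.ofReal (f τ ^ 2)) + volume (Set.Ioc a b) := by
        rw [lintegral_add_right _ measurable_const]; simp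
    _ < ⊤ := by
        rw [ENNReal.add_lt_top]
        exact ⟨hfin.lt_top, by simp [Real.volume_Ioc]⟩

lemma my_conj : Real.HolderConjugate 2 2 := Real.HolderConjugate.two_two

lemma my_key_bound {η : ℝ} (hη : 0 < η) {f : ℝ → ℝ} (hf : Measurable f) {a t : ℝ} (hat : a ≤ t) :
    ENNReal.ofReal ((∫ τ in a..t, Real.exp (-η * (t - τ)) * f τ) ^ 2)
      ≤ ENNReal.ofReal (1 / (2 * η)) * ∫⁻ τ in Set.Ioc a t, ENNReal.ofReal (f τ ^ 2) := by
  by_cases hfin : (∫⁻ τ in Set.Ioc a t, ENNReal.ofReal (f τ ^ 2)) = ⊤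
  · rw [hfin, ENNReal.mul_top (ENNReal.ofReal_pos.2 (by positivity)).ne']
    exact le_top
  have hfi := my_integrableOn_of_sq hf hfin
  have hwm : Measurable fun τ : ℝ => Real.exp (-η * (t - τ)) := by fun_prop
  have hgm : Measurable fun τ : ℝ => Real.exp (-η * (t - τ)) * f τ := hwm.mul hf
  have hgi : IntegrableOn (fun τ : ℝ => Real.exp (-η * (t - τ)) * f τ) (Set.Ioc a t) := by
    apply Integrable.mono hfi hgm.aestronglyMeasurable
    filter_upwards [ae_restrict_mem measurableSet_Ioc] with τ hτ
    rw [Real.norm_eq_abs, Real.norm_eq_abs, abs_mul, abs_of_pos (Real.exp_pos _)]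
    have h1 : Real.exp (-η * (t - τ)) ≤ 1 := by
      rw [Real.exp_le_one_iff]
      nlinarith [hτ.2]
    nlinarith [abs_nonneg (f τ)]
  set v : ℝ := ∫ τ in a..t, Real.exp (-η * (t - τ)) * f τ with hv
  have hveq : v = ∫ τ in Set.Ioc a t, Real.exp (-η * (t - τ)) * f τ :=
    intervalIntegral.integral_of_le hat
  have h1 : ENNReal.ofReal (v ^ 2) = ENNReal.ofReal |v| ^ (2 : ℝ) := by
    rw [← sq_abs, ENNReal.ofReal_rpow_of_nonneg (abs_nonneg _) (by norm_num : (0:ℝ) ≤ 2),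
      Real.rpow_two]
  have h2 : ENNReal.ofReal |v| ≤
      ∫⁻ τ in Set.Ioc a t, ENNReal.ofReal |Real.exp (-η * (t - τ)) * f τ| := by
    calc ENNReal.ofReal |v|
        ≤ ENNReal.ofReal (∫ τ in Set.Ioc a t, |Real.exp (-η * (t - τ)) * f τ|) := by
          apply ENNReal.ofReal_le_ofReal
          rw [hveq, ← Real.norm_eq_abs]
          have hni := norm_integral_le_integral_norm (μ := volume.restrict (Set.Ioc a t))
            (fun τ : ℝ => Real.exp (-η * (t - τ)) * f τ)
          simp only [Real.norm_eq_abs] at hni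
          exact hni
      _ = _ := ofReal_integral_eq_lintegral_ofReal hgi.abs
              (ae_of_all _ fun τ => abs_nonneg _)
  have h3 : (∫⁻ τ in Set.Ioc a t, ENNReal.ofReal |Real.exp (-η * (t - τ)) * f τ|)
      ≤ (∫⁻ τ in Set.Ioc a t, ENNReal.ofReal (Real.exp (-η * (t - τ))) ^ (2:ℝ)) ^ (1/2 : ℝ)
        * (∫⁻ τ in Set.Ioc a t, ENNReal.ofReal |f τ| ^ (2:ℝ)) ^ (1/2 : ℝ) := by
    have hc := ENNReal.lintegral_mul_le_Lp_mul_Lq (volume.restrict (Set.Ioc a t)) my_conj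
      (f := fun τ => ENNReal.ofReal (Real.exp (-η * (t - τ))))
      (g := fun τ => ENNReal.ofReal |f τ|)
      (hwm.ennreal_ofReal.aemeasurable) ((hf.abs.ennreal_ofReal).aemeasurable)
    refine le_trans (le_of_eq ?_) hc
    apply lintegral_congr
    intro τ
    simp only [Pi.mul_apply]
    rw [abs_mul, abs_of_pos (Real.exp_pos _), ENNReal.ofReal_mul (Real.exp_pos _).le]
  have hW : (∫⁻ τ in Set.Ioc a t, ENNReal.ofReal (Real.exp (-η * (t - τ))) ^ (2:ℝ))
      ≤ ENNReal.ofReal (1 / (2 * η)) := by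
    have heq : ∀ τ : ℝ, ENNReal.ofReal (Real.exp (-η * (t - τ))) ^ (2:ℝ)
        = ENNReal.ofReal (Real.exp (-(2 * η) * (t - τ))) := by
      intro τ
      rw [ENNReal.ofReal_rpow_of_nonneg (Real.exp_pos _).le (by norm_num : (0:ℝ) ≤ 2),
        ← Real.exp_mul]
      congr 1; ring_nf
    rw [lintegral_congr heq]
    calc (∫⁻ τ in Set.Ioc a t, ENNReal.ofReal (Real.exp (-(2 * η) * (t - τ))))
        ≤ ∫⁻ τ in Set.Iic t, ENNReal.ofReal (Real.exp (-(2 * η) * (t - τ))) :=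
          lintegral_mono_set Set.Ioc_subset_Iic_self
      _ = ENNReal.ofReal (1 / (2 * η)) := my_lint_exp_Iic (by positivity) t
  have hH : (∫⁻ τ in Set.Ioc a t, ENNReal.ofReal |f τ| ^ (2:ℝ))
      = ∫⁻ τ in Set.Ioc a t, ENNReal.ofReal (f τ ^ 2) := by
    apply lintegral_congr
    intro τ
    rw [ENNReal.ofReal_rpow_of_nonneg (abs_nonneg _) (by norm_num : (0:ℝ) ≤ 2),
      Real.rpow_two, sq_abs]
  calc ENNReal.ofReal (v ^ 2) = ENNReal.ofReal |v| ^ (2:ℝ) := h1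
    _ ≤ ((∫⁻ τ in Set.Ioc a t, ENNReal.ofReal (Real.exp (-η * (t - τ))) ^ (2:ℝ)) ^ (1/2 : ℝ)
        * (∫⁻ τ in Set.Ioc a t, ENNReal.ofReal |f τ| ^ (2:ℝ)) ^ (1/2 : ℝ)) ^ (2:ℝ) :=
        ENNReal.rpow_le_rpow (h2.trans h3) (by norm_num)
    _ = (∫⁻ τ in Set.Ioc a t, ENNReal.ofReal (Real.exp (-η * (t - τ))) ^ (2:ℝ))
        * (∫⁻ τ in Set.Ioc a t, ENNReal.ofReal |f τ| ^ (2:ℝ)) := by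
        rw [ENNReal.mul_rpow_of_nonneg _ _ (by norm_num : (0:ℝ) ≤ 2),
          ← ENNReal.rpow_mul, ← ENNReal.rpow_mul]
        norm_num
    _ ≤ ENNReal.ofReal (1 / (2 * η)) * ∫⁻ τ in Set.Ioc a t, ENNReal.ofReal (f τ ^ 2) :=
        mul_le_mul' hW (le_of_eq hH)

lemma my_key_bound2 {η : ℝ} (hη : 0 < η) {f : ℝ → ℝ} (hf : Measurable f) {t : ℝ}
    (h0t : (0:ℝ) ≤ t)
    (hfin : (∫⁻ τ in Set.Ioc (0:ℝ) t, ENNReal.ofReal (f τ ^ 2)) ≠ ⊤) :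
    ENNReal.ofReal ((∫ τ in (0:ℝ)..t, Real.exp (-η * (t - τ)) * f τ) ^ 2)
      ≤ ENNReal.ofReal (1 / η) *
        ∫⁻ τ in Set.Ioc (0:ℝ) t,
          ENNReal.ofReal (Real.exp (-η * (t - τ))) * ENNReal.ofReal (f τ ^ 2) := by
  have hfi := my_integrableOn_of_sq hf hfin
  have hwm : Measurable fun τ : ℝ => Real.exp (-η * (t - τ)) := by fun_prop
  have hgm : Measurable fun τ : ℝ => Real.exp (-η * (t - τ)) * f τ := hwm.mul hf
  have hgi : IntegrableOn (fun τ : ℝ => Real.exp (-η * (t - τ)) * f τ) (Set.Ioc 0 t) := by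
    apply Integrable.mono hfi hgm.aestronglyMeasurable
    filter_upwards [ae_restrict_mem measurableSet_Ioc] with τ hτ
    rw [Real.norm_eq_abs, Real.norm_eq_abs, abs_mul, abs_of_pos (Real.exp_pos _)]
    have h1 : Real.exp (-η * (t - τ)) ≤ 1 := by
      rw [Real.exp_le_one_iff]
      nlinarith [hτ.2]
    nlinarith [abs_nonneg (f τ)]
  set v : ℝ := ∫ τ in (0:ℝ)..t, Real.exp (-η * (t - τ)) * f τ with hv
  have hveq : v = ∫ τ in Set.Ioc (0:ℝ) t, Real.exp (-η * (t - τ)) * f τ :=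
    intervalIntegral.integral_of_le h0t
  have h1 : ENNReal.ofReal (v ^ 2) = ENNReal.ofReal |v| ^ (2 : ℝ) := by
    rw [← sq_abs, ENNReal.ofReal_rpow_of_nonneg (abs_nonneg _) (by norm_num : (0:ℝ) ≤ 2),
      Real.rpow_two]
  have h2 : ENNReal.ofReal |v| ≤
      ∫⁻ τ in Set.Ioc (0:ℝ) t, ENNReal.ofReal |Real.exp (-η * (t - τ)) * f τ| := by
    calc ENNReal.ofReal |v|
        ≤ ENNReal.ofReal (∫ τ in Set.Ioc (0:ℝ) t, |Real.exp (-η * (t - τ)) * f τ|) := by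
          apply ENNReal.ofReal_le_ofReal
          rw [hveq, ← Real.norm_eq_abs]
          have hni := norm_integral_le_integral_norm (μ := volume.restrict (Set.Ioc (0:ℝ) t))
            (fun τ : ℝ => Real.exp (-η * (t - τ)) * f τ)
          simp only [Real.norm_eq_abs] at hni
          exact hni
      _ = _ := ofReal_integral_eq_lintegral_ofReal hgi.abs
              (ae_of_all _ fun τ => abs_nonneg _)
  set w : ℝ → ℝ≥0∞ := fun τ => ENNReal.ofReal (Real.exp (-η * (t - τ))) with hwdef
  have hw0 : ∀ τ, w τ ≠ 0 := fun τ => (ENNReal.ofReal_pos.2 (Real.exp_pos _)).ne'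
  have hwt : ∀ τ, w τ ≠ ⊤ := fun τ => ENNReal.ofReal_ne_top
  have h3 : (∫⁻ τ in Set.Ioc (0:ℝ) t, ENNReal.ofReal |Real.exp (-η * (t - τ)) * f τ|)
      ≤ (∫⁻ τ in Set.Ioc (0:ℝ) t, (w τ ^ (1/2 : ℝ)) ^ (2:ℝ)) ^ (1/2 : ℝ)
        * (∫⁻ τ in Set.Ioc (0:ℝ) t, (w τ ^ (1/2 : ℝ) * ENNReal.ofReal |f τ|) ^ (2:ℝ))
            ^ (1/2 : ℝ) := by
    have hc := ENNReal.lintegral_mul_le_Lp_mul_Lq (volume.restrict (Set.Ioc (0:ℝ) t)) my_conj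
      (f := fun τ => w τ ^ (1/2 : ℝ))
      (g := fun τ => w τ ^ (1/2 : ℝ) * ENNReal.ofReal |f τ|)
      ((hwm.ennreal_ofReal.pow_const _).aemeasurable)
      (((hwm.ennreal_ofReal.pow_const _).mul hf.abs.ennreal_ofReal).aemeasurable)
    refine le_trans (le_of_eq ?_) hc
    apply lintegral_congr
    intro τ
    simp only [Pi.mul_apply]
    rw [abs_mul, abs_of_pos (Real.exp_pos _), ENNReal.ofReal_mul (Real.exp_pos _).le,
      ← mul_assoc, ← ENNReal.rpow_add _ _ (hw0 τ) (hwt τ)]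
    norm_num
    simp [hwdef, neg_mul]
  have hW : (∫⁻ τ in Set.Ioc (0:ℝ) t, (w τ ^ (1/2 : ℝ)) ^ (2:ℝ)) ≤ ENNReal.ofReal (1 / η) := by
    have heq : ∀ τ : ℝ, (w τ ^ (1/2 : ℝ)) ^ (2:ℝ) = w τ := by
      intro τ
      rw [← ENNReal.rpow_mul]
      norm_num
    rw [lintegral_congr heq]
    calc (∫⁻ τ in Set.Ioc (0:ℝ) t, w τ)
        ≤ ∫⁻ τ in Set.Iic t, ENNReal.ofReal (Real.exp (-η * (t - τ))) :=
          lintegral_mono_set Set.Ioc_subset_Iic_self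
      _ = ENNReal.ofReal (1 / η) := my_lint_exp_Iic hη t
  have hH : (∫⁻ τ in Set.Ioc (0:ℝ) t, (w τ ^ (1/2 : ℝ) * ENNReal.ofReal |f τ|) ^ (2:ℝ))
      = ∫⁻ τ in Set.Ioc (0:ℝ) t, w τ * ENNReal.ofReal (f τ ^ 2) := by
    apply lintegral_congr
    intro τ
    rw [ENNReal.mul_rpow_of_nonneg _ _ (by norm_num : (0:ℝ) ≤ 2), ← ENNReal.rpow_mul,
      ENNReal.ofReal_rpow_of_nonneg (abs_nonneg _) (by norm_num : (0:ℝ) ≤ 2),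
      Real.rpow_two, sq_abs]
    norm_num
  calc ENNReal.ofReal (v ^ 2) = ENNReal.ofReal |v| ^ (2:ℝ) := h1
    _ ≤ ((∫⁻ τ in Set.Ioc (0:ℝ) t, (w τ ^ (1/2 : ℝ)) ^ (2:ℝ)) ^ (1/2 : ℝ)
        * (∫⁻ τ in Set.Ioc (0:ℝ) t, (w τ ^ (1/2 : ℝ) * ENNReal.ofReal |f τ|) ^ (2:ℝ))
            ^ (1/2 : ℝ)) ^ (2:ℝ) :=
        ENNReal.rpow_le_rpow (h2.trans h3) (by norm_num)
    _ = (∫⁻ τ in Set.Ioc (0:ℝ) t, (w τ ^ (1/2 : ℝ)) ^ (2:ℝ))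
        * (∫⁻ τ in Set.Ioc (0:ℝ) t, (w τ ^ (1/2 : ℝ) * ENNReal.ofReal |f τ|) ^ (2:ℝ)) := by
        rw [ENNReal.mul_rpow_of_nonneg _ _ (by norm_num : (0:ℝ) ≤ 2),
          ← ENNReal.rpow_mul, ← ENNReal.rpow_mul]
        norm_num
    _ ≤ ENNReal.ofReal (1 / η) *
        ∫⁻ τ in Set.Ioc (0:ℝ) t, w τ * ENNReal.ofReal (f τ ^ 2) :=
        mul_le_mul' hW (le_of_eq hH)

lemma my_tonelli {η : ℝ} (hη : 0 < η) {F : ℝ → ℝ≥0∞} (hF : Measurable F) :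
    (∫⁻ t in Set.Ici (0:ℝ),
        ∫⁻ τ in Set.Ioc (0:ℝ) t, ENNReal.ofReal (Real.exp (-η * (t - τ))) * F τ)
      ≤ (∫⁻ τ in Set.Ici (0:ℝ), F τ) * ENNReal.ofReal (1 / η) := by
  set G : ℝ → ℝ → ℝ≥0∞ := fun t τ =>
    Set.indicator (Set.Ioc 0 t) (fun τ => ENNReal.ofReal (Real.exp (-η * (t - τ))) * F τ) τ
    with hGdef
  have hstep1 : ∀ t : ℝ,
      (∫⁻ τ in Set.Ioc (0:ℝ) t, ENNReal.ofReal (Real.exp (-η * (t - τ))) * F τ)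
        = ∫⁻ τ, G t τ := by
    intro t
    simp only [hGdef]
    exact (lintegral_indicator measurableSet_Ioc _).symm
  have hGm : AEMeasurable (Function.uncurry G)
      ((volume.restrict (Set.Ici (0:ℝ))).prod volume) := by
    have heq : Function.uncurry G = Set.indicator {p : ℝ × ℝ | 0 < p.2 ∧ p.2 ≤ p.1}
        (fun p => ENNReal.ofReal (Real.exp (-η * (p.1 - p.2))) * F p.2) := by
      funext p
      simp [Function.uncurry, hGdef, Set.indicator_apply, Set.mem_Ioc, Set.mem_setOf_eq]
    rw [heq]
    apply Measurable.aemeasurable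
    apply Measurable.indicator
    · exact (Measurable.ennreal_ofReal (by fun_prop)).mul (hF.comp measurable_snd)
    · exact (measurableSet_lt measurable_const measurable_snd).inter
        (measurableSet_le measurable_snd measurable_fst)
  have hswap : (∫⁻ t in Set.Ici (0:ℝ), ∫⁻ τ, G t τ)
      = ∫⁻ τ, ∫⁻ t in Set.Ici (0:ℝ), G t τ := lintegral_lintegral_swap hGm
  have hstep3 : ∀ τ : ℝ, (∫⁻ t in Set.Ici (0:ℝ), G t τ)
      ≤ Set.indicator (Set.Ioi (0:ℝ)) (fun τ => F τ * ENNReal.ofReal (1 / η)) τ := by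
    intro τ
    by_cases hτ : 0 < τ
    · rw [Set.indicator_of_mem (Set.mem_Ioi.2 hτ)]
      have hpt : ∀ t : ℝ, G t τ ≤
          Set.indicator (Set.Ici τ) (fun t => ENNReal.ofReal (Real.exp (-η * (t - τ)))) t
            * F τ := by
        intro t
        by_cases hle : τ ≤ t
        · rw [Set.indicator_of_mem (Set.mem_Ici.2 hle)]
          simp only [hGdef]
          by_cases hmem : τ ∈ Set.Ioc 0 t
          · rw [Set.indicator_of_mem hmem]
          · rw [Set.indicator_of_notMem hmem]; exact zero_le
        · have : τ ∉ Set.Ioc 0 t := fun h => hle h.2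
          rw [Set.indicator_of_notMem (fun h : t ∈ Set.Ici τ => hle h)]; simp only [hGdef]; rw [
            Set.indicator_of_notMem this, zero_mul]
      calc (∫⁻ t in Set.Ici (0:ℝ), G t τ)
          ≤ ∫⁻ t in Set.Ici (0:ℝ),
              Set.indicator (Set.Ici τ) (fun t => ENNReal.ofReal (Real.exp (-η * (t - τ)))) t
                * F τ := lintegral_mono hpt
        _ = (∫⁻ t in Set.Ici (0:ℝ),
              Set.indicator (Set.Ici τ) (fun t => ENNReal.ofReal (Real.exp (-η * (t - τ)))) t)
                * F τ := by
            apply lintegral_mul_const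
            exact (Measurable.ennreal_ofReal (by fun_prop)).indicator measurableSet_Ici
        _ ≤ ENNReal.ofReal (1 / η) * F τ := by
            apply mul_le_mul_left
            rw [lintegral_indicator measurableSet_Ici _, Measure.restrict_restrict
              measurableSet_Ici]
            calc (∫⁻ t in Set.Ici τ ∩ Set.Ici 0, ENNReal.ofReal (Real.exp (-η * (t - τ))))
                ≤ ∫⁻ t in Set.Ici τ, ENNReal.ofReal (Real.exp (-η * (t - τ))) :=
                  lintegral_mono_set Set.inter_subset_left
              _ = ENNReal.ofReal (1 / η) := my_lint_exp_tail hη τ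
        _ = F τ * ENNReal.ofReal (1 / η) := mul_comm _ _
    · have hz : ∀ t : ℝ, G t τ = 0 := by
        intro t
        simp only [hGdef]
        exact Set.indicator_of_notMem (fun h => hτ h.1) _
      simp only [hz, lintegral_zero]
      exact zero_le
  calc (∫⁻ t in Set.Ici (0:ℝ),
        ∫⁻ τ in Set.Ioc (0:ℝ) t, ENNReal.ofReal (Real.exp (-η * (t - τ))) * F τ)
      = ∫⁻ t in Set.Ici (0:ℝ), ∫⁻ τ, G t τ := by
        apply lintegral_congr; exact hstep1
    _ = ∫⁻ τ, ∫⁻ t in Set.Ici (0:ℝ), G t τ := hswap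
    _ ≤ ∫⁻ τ, Set.indicator (Set.Ioi (0:ℝ)) (fun τ => F τ * ENNReal.ofReal (1 / η)) τ :=
        lintegral_mono hstep3
    _ = ∫⁻ τ in Set.Ioi (0:ℝ), F τ * ENNReal.ofReal (1 / η) :=
        lintegral_indicator measurableSet_Ioi _
    _ = (∫⁻ τ in Set.Ioi (0:ℝ), F τ) * ENNReal.ofReal (1 / η) :=
        lintegral_mul_const _ hF
    _ ≤ (∫⁻ τ in Set.Ici (0:ℝ), F τ) * ENNReal.ofReal (1 / η) :=
        mul_le_mul_left (lintegral_mono_set Set.Ioi_subset_Ici_self) _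

lemma my_split {η : ℝ} (hη : 0 < η) {f : ℝ → ℝ} (hf : Measurable f) {a t : ℝ}
    (ha : 0 ≤ a) (hat : a ≤ t)
    (hfin : (∫⁻ τ in Set.Ioc (0:ℝ) t, ENNReal.ofReal (f τ ^ 2)) ≠ ⊤) :
    (∫ τ in (0:ℝ)..t, Real.exp (-η * (t - τ)) * f τ)
      = Real.exp (-η * (t - a)) * (∫ τ in (0:ℝ)..a, Real.exp (-η * (a - τ)) * f τ)
        + ∫ τ in a..t, Real.exp (-η * (t - τ)) * f τ := by
  have hfi := my_integrableOn_of_sq hf hfin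
  have hwm : Measurable fun τ : ℝ => Real.exp (-η * (t - τ)) := by fun_prop
  have hgm : Measurable fun τ : ℝ => Real.exp (-η * (t - τ)) * f τ := hwm.mul hf
  have hgi : IntegrableOn (fun τ : ℝ => Real.exp (-η * (t - τ)) * f τ) (Set.Ioc 0 t) := by
    apply Integrable.mono hfi hgm.aestronglyMeasurable
    filter_upwards [ae_restrict_mem measurableSet_Ioc] with τ hτ
    rw [Real.norm_eq_abs, Real.norm_eq_abs, abs_mul, abs_of_pos (Real.exp_pos _)]
    have h1 : Real.exp (-η * (t - τ)) ≤ 1 := by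
      rw [Real.exp_le_one_iff]
      nlinarith [hτ.2, hη]
    nlinarith [abs_nonneg (f τ)]
  have hii : ∀ u v : ℝ, 0 ≤ u → u ≤ v → v ≤ t →
      IntervalIntegrable (fun τ => Real.exp (-η * (t - τ)) * f τ) volume u v := by
    intro u v hu huv hvt
    rw [intervalIntegrable_iff_integrableOn_Ioc_of_le huv]
    exact hgi.mono_set (Set.Ioc_subset_Ioc hu hvt)
  have hadd := intervalIntegral.integral_add_adjacent_intervals
    (hii 0 a le_rfl ha hat) (hii a t ha hat le_rfl)
  rw [← hadd]
  congr 1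
  rw [← intervalIntegral.integral_const_mul]
  apply intervalIntegral.integral_congr
  intro τ _
  show Real.exp (-η * (t - τ)) * f τ
      = Real.exp (-η * (t - a)) * (Real.exp (-η * (a - τ)) * f τ)
  rw [← mul_assoc, ← Real.exp_add]
  ring_nf

end Helpers

/-- convergence lemma.  If on the maximal interval of existence
`[0, T)` of the state `x` the function approximation error `f̃` satisfies
`∫₀ᵀ f̃² ≤ C`, the parameter estimate `â` is bounded, `f̃` is locally bounded in
`(x, â)` uniformly in `t`, and `s(t) = ∫₀ᵗ e^{-η(t-τ)} f̃(τ) dτ`, then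
`sup_{[0,T)} s² ≤ (1/(2η)) ∫₀ᵀ f̃²`; consequently `x` remains bounded and exists for
all `t ≥ 0` (`T = ∞`), `â ∈ L∞`, `f̃ ∈ L²`, `s ∈ L² ∩ L∞`, `s → 0` and `x → x_d`. -/
theorem convergence_lemma
    {n p : ℕ}
    (x xd : ℝ → EuclideanSpace ℝ (Fin n))
    (ahat : ℝ → EuclideanSpace ℝ (Fin p))
    (s ftil : ℝ → ℝ)
    (η C : ℝ) (hη : 0 < η)
    -- [0, T) is the maximal interval of existence of x
    (T : ℝ≥0∞) (hT : 0 < T)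
    (hmeas : Measurable ftil)
    -- ∫₀ᵀ f̃² ≤ C, with C independent of T
    (hL2 : (∫⁻ t in {t : ℝ | 0 ≤ t ∧ ENNReal.ofReal t < T},
      ENNReal.ofReal (ftil t ^ 2)) ≤ ENNReal.ofReal C)
    -- â is bounded on [0, T)
    (hahat : ∃ B : ℝ, ∀ t, 0 ≤ t → ENNReal.ofReal t < T → ‖ahat t‖ ≤ B)
    -- f̃ is locally bounded in (x, â) uniformly in t
    (hloc : ∀ R : ℝ, ∃ M : ℝ, ∀ t, 0 ≤ t → ENNReal.ofReal t < T →
      ‖x t‖ ≤ R → ‖ahat t‖ ≤ R → |ftil t| ≤ M)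
    -- s solves ṡ = -η s + f̃ with s(0) = 0, i.e. s(t) = ∫₀ᵗ e^{-η(t-τ)} f̃(τ) dτ
    (hsdef : ∀ t, 0 ≤ t →
      s t = ∫ τ in (0:ℝ)..t, Real.exp (-η * (t - τ)) * ftil τ)
    -- boundedness of s implies boundedness of x
    (hsx : ∀ B : ℝ, (∀ t, 0 ≤ t → ENNReal.ofReal t < T → |s t| ≤ B) →
      ∃ B' : ℝ, ∀ t, 0 ≤ t → ENNReal.ofReal t < T → ‖x t‖ ≤ B')
    -- maximality: if T < ∞ then x escapes every bound before T
    (hmax : T ≠ ⊤ → ∀ B : ℝ, ∃ t : ℝ, 0 ≤ t ∧ ENNReal.ofReal t < T ∧ B ≤ ‖x t‖)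
    -- s → 0 implies x → x_d
    (hxd : Tendsto s atTop (nhds 0) →
      Tendsto (fun t => x t - xd t) atTop (nhds 0)) :
    -- sup_{t ∈ [0,T)} s(t)² ≤ (1/(2η)) ∫₀ᵀ f̃(τ)² dτ
    (∀ t, 0 ≤ t → ENNReal.ofReal t < T →
      ENNReal.ofReal (s t ^ 2) ≤ ENNReal.ofReal (1 / (2 * η)) *
        ∫⁻ τ in {τ : ℝ | 0 ≤ τ ∧ ENNReal.ofReal τ < T},
          ENNReal.ofReal (ftil τ ^ 2)) ∧
    -- x exists for all t ≥ 0 and remains bounded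
    T = ⊤ ∧ InLinf x ∧
    InLinf ahat ∧ InL2 ftil ∧ (InL2 s ∧ InLinf s) ∧
    Tendsto s atTop (nhds 0) ∧
    Tendsto (fun t => x t - xd t) atTop (nhds 0) := by
  have hpart1 : ∀ t, 0 ≤ t → ENNReal.ofReal t < T →
      ENNReal.ofReal (s t ^ 2) ≤ ENNReal.ofReal (1 / (2 * η)) *
        ∫⁻ τ in {τ : ℝ | 0 ≤ τ ∧ ENNReal.ofReal τ < T}, ENNReal.ofReal (ftil τ ^ 2) := by
    intro t ht htT
    rw [hsdef t ht]
    refine le_trans (my_key_bound hη hmeas ht) (mul_le_mul_right (lintegral_mono_set ?_) _)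
    intro τ hτ
    exact ⟨hτ.1.le, lt_of_le_of_lt (ENNReal.ofReal_le_ofReal hτ.2) htT⟩
  set D : ℝ := max C 0 with hD
  have hD0 : (0:ℝ) ≤ D := le_max_right _ _
  have hCD : ENNReal.ofReal C = ENNReal.ofReal D := by
    rcases le_total C 0 with h | h
    · rw [ENNReal.ofReal_eq_zero.2 h, hD, max_eq_right h, ENNReal.ofReal_zero]
    · rw [hD, max_eq_left h]
  have hβ : ∀ t, 0 ≤ t → ENNReal.ofReal t < T → |s t| ≤ Real.sqrt (D / (2 * η)) := by
    intro t ht htT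
    have h1 := le_trans (hpart1 t ht htT) (mul_le_mul_right hL2 _)
    rw [hCD, ← ENNReal.ofReal_mul (by positivity : (0:ℝ) ≤ 1 / (2 * η))] at h1
    have h2 : s t ^ 2 ≤ 1 / (2 * η) * D := by
      refine (ENNReal.ofReal_le_ofReal_iff ?_).1 h1
      positivity
    have h3 : s t ^ 2 ≤ D / (2 * η) := by
      have h4 : 1 / (2 * η) * D = D / (2 * η) := by ring
      linarith
    calc |s t| = Real.sqrt (s t ^ 2) := (Real.sqrt_sq_eq_abs _).symm
      _ ≤ Real.sqrt (D / (2 * η)) := Real.sqrt_le_sqrt h3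
  have hTtop : T = ⊤ := by
    by_contra hne
    obtain ⟨B', hB'⟩ := hsx _ hβ
    obtain ⟨t, ht0, htT, hxt⟩ := hmax hne (B' + 1)
    have := hB' t ht0 htT
    linarith
  subst hTtop
  have htriv : ∀ t : ℝ, ENNReal.ofReal t < (⊤ : ℝ≥0∞) := fun t => ENNReal.ofReal_lt_top
  have hST : {τ : ℝ | 0 ≤ τ ∧ ENNReal.ofReal τ < (⊤ : ℝ≥0∞)} = Set.Ici (0:ℝ) := by
    ext τ
    simp [htriv τ]
  rw [hST] at hL2
  have hIfin : (∫⁻ τ in Set.Ici (0:ℝ), ENNReal.ofReal (ftil τ ^ 2)) < ⊤ :=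
    lt_of_le_of_lt hL2 ENNReal.ofReal_lt_top
  have hfin_t : ∀ t : ℝ, (∫⁻ τ in Set.Ioc (0:ℝ) t, ENNReal.ofReal (ftil τ ^ 2)) ≠ ⊤ :=
    fun t => (lt_of_le_of_lt (lintegral_mono_set (fun τ hτ => hτ.1.le)) hIfin).ne
  have hs0 : Tendsto s atTop (nhds 0) := by
    set μ : Measure ℝ := (volume.restrict (Set.Ici (0:ℝ))).withDensity
      (fun τ => ENNReal.ofReal (ftil τ ^ 2)) with hμ
    have hμIoi : ∀ a : ℝ, μ (Set.Ioi a)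
        = ∫⁻ τ in Set.Ioi a ∩ Set.Ici 0, ENNReal.ofReal (ftil τ ^ 2) := by
      intro a
      rw [hμ, withDensity_apply _ measurableSet_Ioi,
        Measure.restrict_restrict measurableSet_Ioi]
    have hempty : (⋂ m : ℕ, Set.Ioi (m : ℝ)) = ∅ := by
      ext z
      simp only [Set.mem_iInter, Set.mem_Ioi, Set.mem_empty_iff_false, iff_false, not_forall,
        not_lt]
      obtain ⟨m, hm⟩ := exists_nat_gt z
      exact ⟨m, hm.le⟩
    have hfin0 : μ (Set.Ioi ((0:ℕ) : ℝ)) ≠ ⊤ := by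
      rw [hμIoi]
      exact (lt_of_le_of_lt (lintegral_mono_set Set.inter_subset_right) hIfin).ne
    have htail : Tendsto (fun m : ℕ => μ (Set.Ioi (m : ℝ))) atTop (nhds 0) := by
      have h := tendsto_measure_iInter_atTop (μ := μ) (s := fun m : ℕ => Set.Ioi (m : ℝ))
        (fun m => measurableSet_Ioi.nullMeasurableSet)
        (fun a b hab => Set.Ioi_subset_Ioi (by exact_mod_cast hab)) ⟨0, hfin0⟩
      rw [hempty, measure_empty] at h
      exact h
    rw [Metric.tendsto_nhds]
    intro ε hε
    have hδpos : (0:ℝ≥0∞) < ENNReal.ofReal (η * ε ^ 2 / 2) := ENNReal.ofReal_pos.2 (by positivity)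
    obtain ⟨n₀, hn₀⟩ := (htail.eventually_lt_const hδpos).exists
    have hexp0 : Tendsto (fun t : ℝ => Real.exp (-η * (t - (n₀:ℝ))) * Real.sqrt (D / (2 * η)))
        atTop (nhds 0) := by
      have h1 : Tendsto (fun t : ℝ => -η * (t - (n₀:ℝ))) atTop atBot := by
        have := (tendsto_atTop_add_const_right atTop (-(n₀:ℝ)) tendsto_id
          ).const_mul_atTop_of_neg (neg_neg_iff_pos.2 hη)
        simpa [sub_eq_add_neg] using this
      have h2 := (Real.tendsto_exp_atBot.comp h1).mul_const (Real.sqrt (D / (2 * η)))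
      simpa using h2
    have hev := hexp0.eventually_lt_const (show (0:ℝ) < ε/2 by positivity)
    filter_upwards [hev, eventually_ge_atTop (max (n₀:ℝ) 0)] with t hev_t hget
    have hn₀t : (n₀:ℝ) ≤ t := le_trans (le_max_left _ _) hget
    have ht0 : (0:ℝ) ≤ t := le_trans (le_max_right _ _) hget
    rw [Real.dist_eq, sub_zero]
    have hsplit := my_split hη hmeas (Nat.cast_nonneg n₀) hn₀t (hfin_t t)
    have hb2 := my_key_bound hη hmeas hn₀t (f := ftil)
    have hsub2 : Set.Ioc ((n₀:ℝ)) t ⊆ Set.Ioi ((n₀:ℝ)) ∩ Set.Ici 0 := by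
      intro τ hτ
      exact ⟨hτ.1, le_trans (Nat.cast_nonneg n₀) hτ.1.le⟩
    have hb3 : ENNReal.ofReal ((∫ τ in (n₀:ℝ)..t, Real.exp (-η * (t - τ)) * ftil τ) ^ 2)
        ≤ ENNReal.ofReal (1 / (2 * η)) * ENNReal.ofReal (η * ε ^ 2 / 2) := by
      refine le_trans hb2 (mul_le_mul_right ?_ _)
      refine le_trans (lintegral_mono_set hsub2) ?_
      rw [← hμIoi n₀]
      exact hn₀.le
    rw [← ENNReal.ofReal_mul (by positivity)] at hb3
    have hval : 1 / (2 * η) * (η * ε ^ 2 / 2) = (ε/2) ^ 2 := by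
      field_simp
    rw [hval] at hb3
    have h2 : (∫ τ in (n₀:ℝ)..t, Real.exp (-η * (t - τ)) * ftil τ) ^ 2 ≤ (ε/2)^2 :=
      (ENNReal.ofReal_le_ofReal_iff (by positivity)).1 hb3
    have habs2 : |∫ τ in (n₀:ℝ)..t, Real.exp (-η * (t - τ)) * ftil τ| ≤ ε/2 := by
      calc |∫ τ in (n₀:ℝ)..t, Real.exp (-η * (t - τ)) * ftil τ|
          = Real.sqrt ((∫ τ in (n₀:ℝ)..t, Real.exp (-η * (t - τ)) * ftil τ) ^ 2) :=
            (Real.sqrt_sq_eq_abs _).symm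
        _ ≤ Real.sqrt ((ε/2)^2) := Real.sqrt_le_sqrt h2
        _ = ε/2 := Real.sqrt_sq (by positivity)
    have h1b : |Real.exp (-η * (t - (n₀:ℝ))) *
          (∫ τ in (0:ℝ)..(n₀:ℝ), Real.exp (-η * ((n₀:ℝ) - τ)) * ftil τ)|
        ≤ Real.exp (-η * (t - (n₀:ℝ))) * Real.sqrt (D / (2 * η)) := by
      rw [abs_mul, abs_of_pos (Real.exp_pos _)]
      apply mul_le_mul_of_nonneg_left _ (Real.exp_pos _).le
      rw [← hsdef (n₀:ℝ) (Nat.cast_nonneg n₀)]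
      exact hβ (n₀:ℝ) (Nat.cast_nonneg n₀) (htriv _)
    calc |s t| = |Real.exp (-η * (t - (n₀:ℝ))) *
          (∫ τ in (0:ℝ)..(n₀:ℝ), Real.exp (-η * ((n₀:ℝ) - τ)) * ftil τ)
          + ∫ τ in (n₀:ℝ)..t, Real.exp (-η * (t - τ)) * ftil τ| := by
          rw [hsdef t ht0, hsplit]
      _ ≤ |Real.exp (-η * (t - (n₀:ℝ))) *
          (∫ τ in (0:ℝ)..(n₀:ℝ), Real.exp (-η * ((n₀:ℝ) - τ)) * ftil τ)|
          + |∫ τ in (n₀:ℝ)..t, Real.exp (-η * (t - τ)) * ftil τ| := abs_add_le _ _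
      _ < ε := by
          have := h1b.trans_lt hev_t
          linarith
  refine ⟨hpart1, rfl, ?_, ?_, ?_, ⟨?_, ?_⟩, hs0, hxd hs0⟩
  · obtain ⟨B', hB'⟩ := hsx _ hβ
    exact ⟨B', fun t ht => hB' t ht (htriv t)⟩
  · obtain ⟨Ba, hBa⟩ := hahat
    exact ⟨Ba, fun t ht => hBa t ht (htriv t)⟩
  · unfold InL2
    simp only [Real.norm_eq_abs, sq_abs]
    exact hIfin
  · unfold InL2
    simp only [Real.norm_eq_abs, sq_abs]
    have hsq : ∀ t ∈ Set.Ici (0:ℝ), ENNReal.ofReal (s t ^ 2) ≤ ENNReal.ofReal (1 / η) *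
        ∫⁻ τ in Set.Ioc (0:ℝ) t,
          ENNReal.ofReal (Real.exp (-η * (t - τ))) * ENNReal.ofReal (ftil τ ^ 2) := by
      intro t ht
      rw [hsdef t ht]
      exact my_key_bound2 hη hmeas ht (hfin_t t)
    calc (∫⁻ t in Set.Ici (0:ℝ), ENNReal.ofReal (s t ^ 2))
        ≤ ∫⁻ t in Set.Ici (0:ℝ), ENNReal.ofReal (1 / η) *
            ∫⁻ τ in Set.Ioc (0:ℝ) t,
              ENNReal.ofReal (Real.exp (-η * (t - τ))) * ENNReal.ofReal (ftil τ ^ 2) := by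
          apply lintegral_mono_ae
          filter_upwards [ae_restrict_mem measurableSet_Ici] with t ht
          exact hsq t ht
      _ = ENNReal.ofReal (1 / η) * ∫⁻ t in Set.Ici (0:ℝ), ∫⁻ τ in Set.Ioc (0:ℝ) t,
            ENNReal.ofReal (Real.exp (-η * (t - τ))) * ENNReal.ofReal (ftil τ ^ 2) :=
          lintegral_const_mul' _ _ ENNReal.ofReal_ne_top
      _ ≤ ENNReal.ofReal (1 / η) *
            ((∫⁻ τ in Set.Ici (0:ℝ), ENNReal.ofReal (ftil τ ^ 2)) * ENNReal.ofReal (1 / η)) :=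
          mul_le_mul_right (my_tonelli hη ((hmeas.pow_const 2).ennreal_ofReal)) _
      _ < ⊤ := ENNReal.mul_lt_top ENNReal.ofReal_lt_top
          (ENNReal.mul_lt_top hIfin ENNReal.ofReal_lt_top)
  · exact ⟨Real.sqrt (D / (2 * η)), fun t ht => by
      rw [Real.norm_eq_abs]; exact hβ t ht (htriv t)⟩
end
end

section
/- Consider a linearly parameterized dynamics f(x, θ, t) = Y(x, t) θ with known regressor row vector Y(x, t) ∈ ℝ^{1×p} and true parameter a ∈ ℝᵖ, and the natural gradient adaptation law (d/dt) ∇ψ(â(t)) = −Y(x(t), t)ᵀ s(t) (equivalently â̇ = −[∇²ψ(â)]⁻¹ Yᵀ s), where ψ : ℝᵖ → ℝ is strictly convex with continuous gradient. Let A = {θ ∈ ℝᵖ : Y(x(t), t) θ = Y(x(t), t) a for all t ≥ 0}. If â(t) → â_∞ with â_∞ ∈ A as t → ∞, then â_∞ is the unique minimizer over A of θ ↦ d_ψ(θ, â(0)); i.e., â_∞ = argmin_{θ∈A} d_ψ(θ, â(0)). In particular, if â(0) = argmin_{θ∈ℝᵖ} ψ(θ), then â_∞ = argmin_{θ∈A}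 ψ(θ). -/
open MeasureTheory Filter
open scoped RealInnerProductSpace ENNReal

noncomputable section

/-- The Bregman divergence `d_ψ(y, x) = ψ(y) - ψ(x) - ∇ψ(x)ᵀ(y - x)` associated with a
differentiable convex potential `ψ` with gradient `gradψ`. -/
def bregman {p : ℕ} (ψ : EuclideanSpace ℝ (Fin p) → ℝ)
    (gradψ : EuclideanSpace ℝ (Fin p) → EuclideanSpace ℝ (Fin p))
    (y x : EuclideanSpace ℝ (Fin p)) : ℝ :=
  ψ y - ψ x - ⟪gradψ x, y - x⟫

/-- First-order condition for a convex differentiable function. -/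
lemma grad_ineq_aux {p : ℕ} {ψ : EuclideanSpace ℝ (Fin p) → ℝ}
    (hconv : ConvexOn ℝ Set.univ ψ) {x g : EuclideanSpace ℝ (Fin p)}
    (hg : HasGradientAt ψ g x) (y : EuclideanSpace ℝ (Fin p)) :
    ⟪g, y - x⟫ ≤ ψ y - ψ x := by
  set φ : ℝ → ℝ := fun r => ψ (AffineMap.lineMap x y r) with hφdef
  have h0 : HasDerivAt (fun r : ℝ => x + r • (y - x)) (y - x) 0 := by
    simpa using ((hasDerivAt_id (0 : ℝ)).smul_const (y - x)).const_add x
  have hline : HasDerivAt (fun r : ℝ => (AffineMap.lineMap x y r :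
      EuclideanSpace ℝ (Fin p))) (y - x) 0 := by
    refine h0.congr_of_eventuallyEq ?_
    filter_upwards with r
    rw [AffineMap.lineMap_apply_module']
    abel
  have hgx : HasFDerivAt ψ (InnerProductSpace.toDual ℝ (EuclideanSpace ℝ (Fin p)) g)
      ((AffineMap.lineMap x y : ℝ →ᵃ[ℝ] EuclideanSpace ℝ (Fin p)) 0) := by
    rw [AffineMap.lineMap_apply_zero]
    exact hg.hasFDerivAt
  have hd : HasDerivAt φ ⟪g, y - x⟫ 0 := by
    have := hgx.comp_hasDerivAt 0 hline
    exact this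
  have hconvφ : ConvexOn ℝ Set.univ φ := by
    have h := hconv.comp_affineMap (AffineMap.lineMap x y : ℝ →ᵃ[ℝ] EuclideanSpace ℝ (Fin p))
    exact h
  have hslope := hconvφ.le_slope_of_hasDerivAt (Set.mem_univ (0 : ℝ)) (Set.mem_univ 1)
    one_pos hd
  have hs : slope φ 0 1 = ψ y - ψ x := by
    simp [slope_def_field, hφdef]
  linarith [hslope, hs ▸ hslope]

/-- Strict first-order condition for a strictly convex differentiable function. -/
lemma grad_strict_ineq_aux {p : ℕ} {ψ : EuclideanSpace ℝ (Fin p) → ℝ}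
    (hconv : StrictConvexOn ℝ Set.univ ψ) {x g : EuclideanSpace ℝ (Fin p)}
    (hg : HasGradientAt ψ g x) {y : EuclideanSpace ℝ (Fin p)} (hne : y ≠ x) :
    ⟪g, y - x⟫ < ψ y - ψ x := by
  set m : EuclideanSpace ℝ (Fin p) := (1/2 : ℝ) • x + (1/2 : ℝ) • y with hm
  have hmid : ψ m < (1/2 : ℝ) * ψ x + (1/2 : ℝ) * ψ y := by
    have := hconv.2 (Set.mem_univ x) (Set.mem_univ y) (Ne.symm hne)
      (by norm_num : (0:ℝ) < 1/2) (by norm_num : (0:ℝ) < 1/2) (by norm_num)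
    simpa [hm, smul_eq_mul] using this
  have h1 : ⟪g, m - x⟫ ≤ ψ m - ψ x := grad_ineq_aux hconv.convexOn hg m
  have hmx : m - x = (1/2 : ℝ) • (y - x) := by
    rw [hm]; rw [smul_sub]; module
  rw [hmx, real_inner_smul_right] at h1
  linarith

/-- implicit regularization of natural gradient adaptation, linearly
parameterized dynamics.  If the mirror-descent/natural-gradient adaptation law
`(d/dt) ∇ψ(â) = -Yᵀ s` converges to an interpolating parameter vector `â_∞ ∈ A`, then
`â_∞` is the unique minimizer over `A` of `θ ↦ d_ψ(θ, â(0))`; in particular, if `â(0)`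
minimizes `ψ` globally, then `â_∞` uniquely minimizes `ψ` over `A`. -/
theorem implicit_regularization_linear
    {p : ℕ}
    (ψ : EuclideanSpace ℝ (Fin p) → ℝ)
    (gradψ : EuclideanSpace ℝ (Fin p) → EuclideanSpace ℝ (Fin p))
    (Y : ℝ → EuclideanSpace ℝ (Fin p))
    (a ainf : EuclideanSpace ℝ (Fin p))
    (ahat : ℝ → EuclideanSpace ℝ (Fin p))
    (s : ℝ → ℝ)
    -- ψ is strictly convex with (continuous) gradient gradψ
    (hgrad : ∀ θ, HasGradientAt ψ (gradψ θ) θ)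
    (hconv : StrictConvexOn ℝ Set.univ ψ)
    -- signals are continuous
    (hconts : Continuous s) (hcontY : Continuous Y) (hconta : Continuous ahat)
    -- t ↦ s(t) Y(t)(â(t) - θ) is locally integrable for every θ
    (hloci : ∀ θ : EuclideanSpace ℝ (Fin p),
      LocallyIntegrableOn (fun t => s t * ⟪Y t, ahat t - θ⟫) (Set.Ici (0 : ℝ)))
    -- natural gradient adaptation law: (d/dt) ∇ψ(â(t)) = -Y(t)ᵀ s(t)
    (hlaw : ∀ t, 0 ≤ t →
      HasDerivAt (fun τ => gradψ (ahat τ)) (-(s t • Y t)) t)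
    -- â(t) → â_∞ and â_∞ interpolates: â_∞ ∈ A
    (hlim : Tendsto ahat atTop (nhds ainf))
    (hmem : ∀ t, 0 ≤ t → ⟪Y t, ainf⟫ = ⟪Y t, a⟫) :
    -- â_∞ is the unique minimizer over A of the Bregman divergence to â(0)
    ((∀ θ, (∀ t, 0 ≤ t → ⟪Y t, θ⟫ = ⟪Y t, a⟫) →
        bregman ψ gradψ ainf (ahat 0) ≤ bregman ψ gradψ θ (ahat 0)) ∧
      (∀ θ, (∀ t, 0 ≤ t → ⟪Y t, θ⟫ = ⟪Y t, a⟫) → θ ≠ ainf →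
        bregman ψ gradψ ainf (ahat 0) < bregman ψ gradψ θ (ahat 0))) ∧
    -- in particular, if â(0) minimizes ψ globally, â_∞ uniquely minimizes ψ over A
    ((∀ θ, ψ (ahat 0) ≤ ψ θ) →
      (∀ θ, (∀ t, 0 ≤ t → ⟪Y t, θ⟫ = ⟪Y t, a⟫) →
        ψ ainf ≤ ψ θ ∧ (θ ≠ ainf → ψ ainf < ψ θ))) := by
  have hψcont : Continuous ψ :=
    continuous_iff_continuousAt.2 fun x => (hgrad x).differentiableAt.continuousAt
  -- Step 1: for any u orthogonal to all Y t (t ≥ 0), ⟪gradψ (ahat T), u⟫ is constant on [0,∞)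
  have hconst : ∀ (u : EuclideanSpace ℝ (Fin p)), (∀ t, 0 ≤ t → ⟪Y t, u⟫ = 0) →
      ∀ T, 0 ≤ T → ⟪gradψ (ahat T), u⟫ = ⟪gradψ (ahat 0), u⟫ := by
    intro u hu T hT
    set G : ℝ → ℝ := fun τ => ⟪gradψ (ahat τ), u⟫ with hG
    have hGderiv : ∀ t ∈ Set.Ici (0 : ℝ), HasDerivAt G 0 t := by
      intro t ht
      have := HasDerivAt.inner ℝ (hlaw t ht) (hasDerivAt_const t u)
      have h0 : ⟪gradψ (ahat t), (0 : EuclideanSpace ℝ (Fin p))⟫ + ⟪-(s t • Y t), u⟫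
          = 0 := by
        rw [inner_zero_right, inner_neg_left, real_inner_smul_left, hu t ht]
        ring
      rw [h0] at this
      exact this
    have := Convex.is_const_of_fderivWithin_eq_zero (convex_Ici (0 : ℝ))
      (f := G) (fun t ht => ((hGderiv t ht).hasDerivWithinAt).differentiableWithinAt)
      (fun t ht => by
        have h1 : HasFDerivWithinAt G (0 : ℝ →L[ℝ] ℝ) (Set.Ici 0) t := by
          have h2 := ((hGderiv t ht).hasDerivWithinAt (s := Set.Ici 0)).hasFDerivWithinAt
          have h3 : (ContinuousLinearMap.toSpanSingleton ℝ (0 : ℝ)) = 0 := by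
            ext; simp
          rwa [h3] at h2
        exact h1.fderivWithin (uniqueDiffOn_Ici 0 t ht))
      hT (Set.self_mem_Ici)
    exact this
  -- Step 2: identification of the limit of the constant: ⟪gradψ ainf, u⟫ = ⟪gradψ (ahat 0), u⟫
  have hident : ∀ (u : EuclideanSpace ℝ (Fin p)), (∀ t, 0 ≤ t → ⟪Y t, u⟫ = 0) →
      ⟪gradψ ainf, u⟫ = ⟪gradψ (ahat 0), u⟫ := by
    intro u hu
    set C : ℝ := ⟪gradψ (ahat 0), u⟫ with hC
    -- for every ε > 0 : C * ε ≤ ψ (ainf + ε • u) - ψ ainf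
    have hupper : ∀ ε : ℝ, 0 < ε → C * ε ≤ ψ (ainf + ε • u) - ψ ainf := by
      intro ε hε
      have htend : Tendsto (fun T => ψ (ahat T + ε • u) - ψ (ahat T)) atTop
          (nhds (ψ (ainf + ε • u) - ψ ainf)) := by
        exact ((hψcont.tendsto _).comp (hlim.add_const _)).sub ((hψcont.tendsto _).comp hlim)
      refine ge_of_tendsto htend ?_
      filter_upwards [eventually_ge_atTop (0 : ℝ)] with T hT
      have h1 : ⟪gradψ (ahat T), (ahat T + ε • u) - ahat T⟫
          ≤ ψ (ahat T + ε • u) - ψ (ahat T) :=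
        grad_ineq_aux hconv.convexOn (hgrad (ahat T)) _
      have h2 : (ahat T + ε • u) - ahat T = ε • u := by abel
      rw [h2, real_inner_smul_right, hconst u hu T hT] at h1
      linarith
    have hlower : ∀ ε : ℝ, 0 < ε → ψ ainf - ψ (ainf - ε • u) ≤ C * ε := by
      intro ε hε
      have htend : Tendsto (fun T => ψ (ahat T - ε • u) - ψ (ahat T)) atTop
          (nhds (ψ (ainf - ε • u) - ψ ainf)) := by
        exact ((hψcont.tendsto _).comp (hlim.sub_const _)).sub ((hψcont.tendsto _).comp hlim)
      have hle : -(C * ε) ≤ ψ (ainf - ε • u) - ψ ainf := by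
        refine ge_of_tendsto htend ?_
        filter_upwards [eventually_ge_atTop (0 : ℝ)] with T hT
        have h1 : ⟪gradψ (ahat T), (ahat T - ε • u) - ahat T⟫
            ≤ ψ (ahat T - ε • u) - ψ (ahat T) :=
          grad_ineq_aux hconv.convexOn (hgrad (ahat T)) _
        have h2 : (ahat T - ε • u) - ahat T = (-ε) • u := by
          rw [neg_smul]; abel
        rw [h2, real_inner_smul_right, hconst u hu T hT] at h1
        linarith
      linarith
    -- the line function through ainf in direction u
    set h : ℝ → ℝ := fun r => ψ (ainf + r • u) with hhdef
    have hline : HasDerivAt (fun r : ℝ => ainf + r • u) u 0 := by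
      simpa using ((hasDerivAt_id (0 : ℝ)).smul_const u).const_add ainf
    have hgx : HasFDerivAt ψ
        (InnerProductSpace.toDual ℝ (EuclideanSpace ℝ (Fin p)) (gradψ ainf))
        (ainf + (0 : ℝ) • u) := by
      rw [zero_smul, add_zero]; exact (hgrad ainf).hasFDerivAt
    have hd : HasDerivAt h ⟪gradψ ainf, u⟫ 0 := by
      have := hgx.comp_hasDerivAt 0 hline
      exact this
    have hslope : Tendsto (slope h 0) (nhdsWithin 0 {(0:ℝ)}ᶜ) (nhds ⟪gradψ ainf, u⟫) :=
      hasDerivAt_iff_tendsto_slope.1 hd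
    -- from the right : C ≤ h'(0)
    have hub : C ≤ ⟪gradψ ainf, u⟫ := by
      have h1 : Tendsto (slope h 0) (nhdsWithin 0 (Set.Ioi 0)) (nhds ⟪gradψ ainf, u⟫) :=
        hslope.mono_left (nhdsWithin_mono 0 (fun r hr => ne_of_gt hr))
      refine ge_of_tendsto h1 ?_
      filter_upwards [self_mem_nhdsWithin] with r (hr : 0 < r)
      have := hupper r hr
      rw [slope_def_field, div_eq_inv_mul]
      have : C ≤ (h r - h 0) / r := by
        rw [le_div_iff₀ hr]
        simpa [hhdef] using hupper r hr
      simpa [slope_def_field, div_eq_inv_mul, mul_comm] using this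
    -- from the left : h'(0) ≤ C
    have hlb : ⟪gradψ ainf, u⟫ ≤ C := by
      have h1 : Tendsto (slope h 0) (nhdsWithin 0 (Set.Iio 0)) (nhds ⟪gradψ ainf, u⟫) :=
        hslope.mono_left (nhdsWithin_mono 0 (fun r hr => ne_of_lt hr))
      refine le_of_tendsto h1 ?_
      filter_upwards [self_mem_nhdsWithin] with r (hr : r < 0)
      have hε : 0 < -r := by linarith
      have := hlower (-r) hε
      have hval : h r = ψ (ainf - (-r) • u) := by
        simp [hhdef, neg_smul, sub_eq_add_neg]
      have : (h r - h 0) / r ≤ C := by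
        rw [div_le_iff_of_neg hr]
        have h0 : h 0 = ψ ainf := by simp [hhdef]
        rw [hval, h0]
        nlinarith [hlower (-r) hε]
      simpa [slope_def_field, div_eq_inv_mul, mul_comm] using this
    linarith
  -- Step 3: key identity. For θ ∈ A:
  -- bregman θ (ahat 0) - bregman ainf (ahat 0) = bregman θ ainf
  have hkey : ∀ θ, (∀ t, 0 ≤ t → ⟪Y t, θ⟫ = ⟪Y t, a⟫) →
      bregman ψ gradψ θ (ahat 0) - bregman ψ gradψ ainf (ahat 0)
        = bregman ψ gradψ θ ainf := by
    intro θ hθ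
    have hu : ∀ t, 0 ≤ t → ⟪Y t, θ - ainf⟫ = 0 := by
      intro t ht
      rw [inner_sub_right, hθ t ht, hmem t ht, sub_self]
    have h1 : ⟪gradψ ainf, θ - ainf⟫ = ⟪gradψ (ahat 0), θ - ainf⟫ := hident _ hu
    simp only [bregman]
    have h2 : ⟪gradψ (ahat 0), θ - ahat 0⟫ - ⟪gradψ (ahat 0), ainf - ahat 0⟫
        = ⟪gradψ (ahat 0), θ - ainf⟫ := by
      rw [← inner_sub_right]
      congr 1
      abel
    linarith [h2, h1]
  have hpos : ∀ θ, θ ≠ ainf → 0 < bregman ψ gradψ θ ainf := by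
    intro θ hθ
    have := grad_strict_ineq_aux hconv (hgrad ainf) hθ
    simp only [bregman]
    linarith
  have hnonneg : ∀ θ, 0 ≤ bregman ψ gradψ θ ainf := by
    intro θ
    have := grad_ineq_aux hconv.convexOn (hgrad ainf) θ
    simp only [bregman]
    linarith
  constructor
  · constructor
    · intro θ hθ
      have := hkey θ hθ
      linarith [hnonneg θ]
    · intro θ hθ hne
      have := hkey θ hθ
      linarith [hpos θ hne]
  · intro hmin θ hθ
    -- gradψ (ahat 0) = 0
    have hg0 : gradψ (ahat 0) = 0 := by
      have hlocmin : IsLocalMin ψ (ahat 0) := by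
        apply IsMinOn.isLocalMin _ (Filter.univ_mem)
        intro x _
        exact hmin x
      have := hlocmin.hasFDerivAt_eq_zero (hgrad (ahat 0)).hasFDerivAt
      have hinner : ∀ v, ⟪gradψ (ahat 0), v⟫ = 0 := by
        intro v
        have h1 : (InnerProductSpace.toDual ℝ (EuclideanSpace ℝ (Fin p)) (gradψ (ahat 0))) v
            = (0 : EuclideanSpace ℝ (Fin p) →L[ℝ] ℝ) v := by rw [this]
        simpa using h1
      exact inner_self_eq_zero.1 (hinner (gradψ (ahat 0)))
    have hbr : ∀ y, bregman ψ gradψ y (ahat 0) = ψ y - ψ (ahat 0) := by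
      intro y
      simp [bregman, hg0]
    have h1 := hkey θ hθ
    rw [hbr θ, hbr ainf] at h1
    constructor
    · linarith [hnonneg θ]
    · intro hne
      linarith [hpos θ hne]

end
end

section
/- Consider a nonlinearly parameterized dynamics f(x, θ, t) with true parameter a ∈ ℝᵖ satisfying: (i) the monotonicity assumption with known function α(x, t) ∈ ℝᵖ and constant D₁ > 0 (namely (â − a)ᵀ α(x,t) (f(x,â,t) − f(x,a,t)) ≥ 0 and |α(x,t)ᵀ(â − a)| ≥ (1/D₁)|f(x,â,t) − f(x,a,t)| for all â, x, t), and (ii) for any θ, f(x(t), θ, t) = f(x(t), a, t) for all t implies α(x(t), t)ᵀθ = α(x(t), t)ᵀa for all t. Consider the adaptation law (d/dt) ∇ψ(â(t)) = −f̃(t) α(x(t), t) (equivalently â̇ = −[∇²ψ(â)]⁻¹ f̃ α), where f̃(t) = f(x(t), â(t), t) − f(x(t), a, t) and ψ : ℝᵖ → ℝ is strictly convex with continuous gradient. Let A = {θ ∈ ℝᵖ : f(x(t), θ, t) = f(x(t), a, t) for all t ≥ 0}. If â(t) → â_∞ with â_∞ ∈ A, then â_∞ is the unique minimizer over A of θ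 ↦ d_ψ(θ, â(0)). -/
open MeasureTheory Filter
open scoped RealInnerProductSpace ENNReal

noncomputable section

lemma grad_ineq {p : ℕ} {ψ : EuclideanSpace ℝ (Fin p) → ℝ}
    (hcv : ConvexOn ℝ Set.univ ψ) {g u : EuclideanSpace ℝ (Fin p)}
    (hg : HasGradientAt ψ g u) (v : EuclideanSpace ℝ (Fin p)) :
    ψ u + ⟪g, v - u⟫ ≤ ψ v := by
  set A : ℝ →ᵃ[ℝ] EuclideanSpace ℝ (Fin p) := AffineMap.lineMap u v with hA
  have hqconv : ConvexOn ℝ Set.univ (ψ ∘ A) := by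
    have := hcv.comp_affineMap A
    simpa using this
  have hAfun : (fun s : ℝ => A s) = fun s : ℝ => u + s • (v - u) := by
    funext s
    simp only [hA, AffineMap.lineMap_apply_module]
    module
  have hline : HasDerivAt (fun s : ℝ => A s) (v - u) 0 := by
    rw [hAfun]
    simpa using ((hasDerivAt_id (0:ℝ)).smul_const (v - u)).const_add u
  have h0 : A 0 = u := by simp [hA]
  have h1 : A 1 = v := by simp [hA]
  have hfd : HasFDerivAt ψ (InnerProductSpace.toDual ℝ _ g) (A 0) := by
    rw [h0]; exact hasGradientAt_iff_hasFDerivAt.mp hg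
  have hq : HasDerivAt (ψ ∘ A) ⟪g, v - u⟫ 0 := by
    have := hfd.comp_hasDerivAt (0:ℝ) hline
    simpa [InnerProductSpace.toDual_apply_apply] using this
  have hs := hqconv.le_slope_of_hasDerivAt (Set.mem_univ (0:ℝ)) (Set.mem_univ (1:ℝ))
    one_pos hq
  rw [slope_def_field] at hs
  simp only [Function.comp_apply, h0, h1] at hs
  norm_num at hs
  simp only [PiLp.inner_apply, RCLike.inner_apply, conj_trivial, PiLp.sub_apply] at hs ⊢
  linarith
/-- implicit regularization of natural gradient adaptation, nonlinearly
parameterized dynamics under the monotonicity assumption.  If the adaptation law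
`(d/dt) ∇ψ(â) = -f̃ α(x, t)` converges to an interpolating parameter vector `â_∞ ∈ A`,
then `â_∞` is the unique minimizer over `A` of `θ ↦ d_ψ(θ, â(0))`. -/
theorem implicit_regularization_nonlinear
    {n p : ℕ}
    (ψ : EuclideanSpace ℝ (Fin p) → ℝ)
    (gradψ : EuclideanSpace ℝ (Fin p) → EuclideanSpace ℝ (Fin p))
    (f : EuclideanSpace ℝ (Fin n) → EuclideanSpace ℝ (Fin p) → ℝ → ℝ)
    (α : EuclideanSpace ℝ (Fin n) → ℝ → EuclideanSpace ℝ (Fin p))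
    (x : ℝ → EuclideanSpace ℝ (Fin n))
    (a ainf : EuclideanSpace ℝ (Fin p))
    (ahat : ℝ → EuclideanSpace ℝ (Fin p))
    (D₁ : ℝ) (hD₁ : 0 < D₁)
    -- (i) monotonicity assumption
    (hmono₁ : ∀ (b : EuclideanSpace ℝ (Fin p)) (ξ : EuclideanSpace ℝ (Fin n)) (t : ℝ),
      0 ≤ t → 0 ≤ ⟪b - a, α ξ t⟫ * (f ξ b t - f ξ a t))
    (hmono₂ : ∀ (b : EuclideanSpace ℝ (Fin p)) (ξ : EuclideanSpace ℝ (Fin n)) (t : ℝ),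
      0 ≤ t → (1 / D₁) * |f ξ b t - f ξ a t| ≤ |⟪α ξ t, b - a⟫|)
    -- (ii) interpolation of f along the trajectory forces interpolation of αᵀθ
    (hinv : ∀ θ : EuclideanSpace ℝ (Fin p),
      (∀ t, 0 ≤ t → f (x t) θ t = f (x t) a t) →
      ∀ t, 0 ≤ t → ⟪α (x t) t, θ⟫ = ⟪α (x t) t, a⟫)
    -- ψ is strictly convex with gradient gradψ
    (hgrad : ∀ θ, HasGradientAt ψ (gradψ θ) θ)
    (hconv : StrictConvexOn ℝ Set.univ ψ)
    -- signals are continuous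
    (hcontx : Continuous x) (hconta : Continuous ahat)
    -- t ↦ f̃(t) α(x(t), t)ᵀ(â(t) - θ) is locally integrable for every θ
    (hloci : ∀ θ : EuclideanSpace ℝ (Fin p),
      LocallyIntegrableOn
        (fun t => (f (x t) (ahat t) t - f (x t) a t) * ⟪α (x t) t, ahat t - θ⟫)
        (Set.Ici (0 : ℝ)))
    -- adaptation law (d/dt) ∇ψ(â(t)) = -f̃(t) α(x(t), t)
    (hlaw : ∀ t, 0 ≤ t →
      HasDerivAt (fun τ => gradψ (ahat τ))
        (-((f (x t) (ahat t) t - f (x t) a t) • α (x t) t)) t)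
    -- â(t) → â_∞ and â_∞ ∈ A
    (hlim : Tendsto ahat atTop (nhds ainf))
    (hmem : ∀ t, 0 ≤ t → f (x t) ainf t = f (x t) a t) :
    -- â_∞ is the unique minimizer over A of the Bregman divergence to â(0)
    (∀ θ, (∀ t, 0 ≤ t → f (x t) θ t = f (x t) a t) →
      bregman ψ gradψ ainf (ahat 0) ≤ bregman ψ gradψ θ (ahat 0)) ∧
    (∀ θ, (∀ t, 0 ≤ t → f (x t) θ t = f (x t) a t) → θ ≠ ainf →
      bregman ψ gradψ ainf (ahat 0) < bregman ψ gradψ θ (ahat 0)) := by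
  have hcv : ConvexOn ℝ Set.univ ψ := hconv.convexOn
  have hψc : Continuous ψ := by
    rw [continuous_iff_continuousAt]
    exact fun u => ((hgrad u).differentiableAt).continuousAt
  have gineq : ∀ u v, ψ u + ⟪gradψ u, v - u⟫ ≤ ψ v :=
    fun u v => grad_ineq hcv (hgrad u) v
  have key : ∀ θ : EuclideanSpace ℝ (Fin p),
      (∀ t, 0 ≤ t → f (x t) θ t = f (x t) a t) →
      ψ θ + ψ ainf - 2 * ψ ((1/2 : ℝ) • θ + (1/2 : ℝ) • ainf)
        ≤ bregman ψ gradψ θ (ahat 0) - bregman ψ gradψ ainf (ahat 0) := by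
    intro θ hθ
    set h : ℝ → ℝ := fun t => ⟪gradψ (ahat t), θ - ainf⟫ with hh
    -- h has zero derivative on [0, ∞)
    have hderiv : ∀ t, 0 ≤ t → HasDerivAt h 0 t := by
      intro t ht
      have h1 := HasDerivAt.inner ℝ (hlaw t ht) (hasDerivAt_const t (θ - ainf))
      have hα : ⟪α (x t) t, θ - ainf⟫ = 0 := by
        rw [inner_sub_right, hinv θ hθ t ht, hinv ainf hmem t ht, sub_self]
      have hz : ⟪gradψ (ahat t), (0 : EuclideanSpace ℝ (Fin p))⟫
          + ⟪-((f (x t) (ahat t) t - f (x t) a t) • α (x t) t), θ - ainf⟫ = 0 := by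
        rw [inner_zero_right, inner_neg_left, real_inner_smul_left, hα]
        ring
      rw [hz] at h1
      exact h1
    -- hence h is constant on [0, ∞)
    have hconst : ∀ t, 0 ≤ t → h t = h 0 := by
      intro t ht
      have := constant_of_has_deriv_right_zero (f := h) (a := 0) (b := t)
        (fun s hs => ((hderiv s hs.1).continuousAt).continuousWithinAt)
        (fun s hs => ((hderiv s hs.1).hasDerivWithinAt).mono (Set.subset_univ _))
      exact this t ⟨ht, le_refl t⟩
    -- the Bregman difference equals ψ θ - ψ ainf - h t for every t ≥ 0
    have hceq : ∀ t, 0 ≤ t →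
        bregman ψ gradψ θ (ahat 0) - bregman ψ gradψ ainf (ahat 0)
          = ψ θ - ψ ainf - h t := by
      intro t ht
      rw [hconst t ht]
      simp only [bregman, hh]
      rw [inner_sub_right, inner_sub_right, inner_sub_right]
      ring
    -- lower bound at each time t ≥ 0
    have hbound : ∀ t, 0 ≤ t →
        ψ θ - ψ ainf - 2 * ψ ((1/2 : ℝ) • θ + (1/2 : ℝ) • ahat t)
            + 3 * ψ (ahat t) - ψ ((2 : ℝ) • ahat t - ainf)
          ≤ bregman ψ gradψ θ (ahat 0) - bregman ψ gradψ ainf (ahat 0) := by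
      intro t ht
      rw [hceq t ht]
      have e1 := gineq (ahat t) ((1/2 : ℝ) • θ + (1/2 : ℝ) • ahat t)
      have e2 := gineq (ahat t) ((2 : ℝ) • ahat t - ainf)
      have hsplit : θ - ainf
          = (2 : ℝ) • (((1/2 : ℝ) • θ + (1/2 : ℝ) • ahat t) - ahat t)
            + (((2 : ℝ) • ahat t - ainf) - ahat t) := by
        module
      have hsum : h t = 2 * ⟪gradψ (ahat t), ((1/2 : ℝ) • θ + (1/2 : ℝ) • ahat t) - ahat t⟫
          + ⟪gradψ (ahat t), ((2 : ℝ) • ahat t - ainf) - ahat t⟫ := by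
        rw [hh]
        simp only
        rw [hsplit, inner_add_right, real_inner_smul_right]
      rw [hsum]
      linarith
    -- take the limit t → ∞
    have hmid : Tendsto (fun t => (1/2 : ℝ) • θ + (1/2 : ℝ) • ahat t) atTop
        (nhds ((1/2 : ℝ) • θ + (1/2 : ℝ) • ainf)) :=
      tendsto_const_nhds.add (hlim.const_smul _)
    have hw : Tendsto (fun t => (2 : ℝ) • ahat t - ainf) atTop (nhds ainf) := by
      have : Tendsto (fun t => (2 : ℝ) • ahat t - ainf) atTop
          (nhds ((2 : ℝ) • ainf - ainf)) := (hlim.const_smul _).sub tendsto_const_nhds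
      have h2 : (2 : ℝ) • ainf - ainf = ainf := by module
      rwa [h2] at this
    have hlimit : Tendsto (fun t =>
        ψ θ - ψ ainf - 2 * ψ ((1/2 : ℝ) • θ + (1/2 : ℝ) • ahat t)
            + 3 * ψ (ahat t) - ψ ((2 : ℝ) • ahat t - ainf)) atTop
        (nhds (ψ θ + ψ ainf - 2 * ψ ((1/2 : ℝ) • θ + (1/2 : ℝ) • ainf))) := by
      have l1 : Tendsto (fun t => ψ ((1/2 : ℝ) • θ + (1/2 : ℝ) • ahat t)) atTop
          (nhds (ψ ((1/2 : ℝ) • θ + (1/2 : ℝ) • ainf))) :=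
        (hψc.continuousAt.tendsto.comp hmid)
      have l2 : Tendsto (fun t => ψ (ahat t)) atTop (nhds (ψ ainf)) :=
        (hψc.continuousAt.tendsto.comp hlim)
      have l3 : Tendsto (fun t => ψ ((2 : ℝ) • ahat t - ainf)) atTop (nhds (ψ ainf)) :=
        (hψc.continuousAt.tendsto.comp hw)
      have := ((((tendsto_const_nhds (x := ψ θ - ψ ainf)).sub
        (l1.const_mul 2)).add (l2.const_mul 3)).sub l3)
      convert this using 2
      ring
    refine le_of_tendsto hlimit ?_
    filter_upwards [eventually_ge_atTop (0 : ℝ)] with t ht using hbound t ht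
  constructor
  · intro θ hθ
    have hk := key θ hθ
    have hcx := hcv.2 (Set.mem_univ θ) (Set.mem_univ ainf)
      (by norm_num : (0:ℝ) ≤ 1/2) (by norm_num : (0:ℝ) ≤ 1/2) (by norm_num)
    simp only [smul_eq_mul] at hcx
    linarith
  · intro θ hθ hne
    have hk := key θ hθ
    have hcx := hconv.2 (Set.mem_univ θ) (Set.mem_univ ainf) hne
      (by norm_num : (0:ℝ) < 1/2) (by norm_num : (0:ℝ) < 1/2) (by norm_num)
    simp only [smul_eq_mul] at hcx
    linarith
end
end

section
/- Consider the linearly parameterized error dynamics ṡ(t) = −η s(t) + Y(t)(â(t) − a) with η > 0, Y(t) = Y(x(t), t) ∈ ℝ^{1×p}, together with the momentum adaptation law v̂̇ = −γ Y(t)ᵀ s, â̇ = β 𝒩(t)(v̂ − â), where 𝒩(t) = 1 + μ‖Y(t)‖², γ > 0, β > 0, and μ > γ/(η β). Then all trajectories (x, v̂, â) remain bounded, s ∈ L∞ ∩ L², (â − v̂) ∈ L², s(t) → 0 as t → ∞, and x(t) → x_d(t). -/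
open MeasureTheory Filter
open scoped RealInnerProductSpace ENNReal

noncomputable section

lemma lemA {h : ℝ → ℝ} {C : ℝ}
    (hcont : ContinuousOn h (Set.Ici 0))
    (hnn : ∀ t, 0 ≤ h t)
    (hint : ∀ t, 0 ≤ t → ∫ u in (0:ℝ)..t, h u ≤ C) :
    ∫⁻ t in Set.Ici (0:ℝ), ENNReal.ofReal (h t) ≤ ENNReal.ofReal C := by
  set F : ℝ → ℝ≥0∞ := fun t => ENNReal.ofReal (h t) with hF
  set f : ℕ → ℝ → ℝ≥0∞ := fun n => (Set.Icc (0:ℝ) n).indicator F with hf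
  have hmeas : ∀ n : ℕ, AEMeasurable (f n) (volume : Measure ℝ) := by
    intro n
    rw [hf]
    rw [aemeasurable_indicator_iff measurableSet_Icc]
    exact (ENNReal.continuous_ofReal.comp_continuousOn
      (hcont.mono (Set.Icc_subset_Ici_self))).aemeasurable measurableSet_Icc
  have hmono : ∀ x : ℝ, Monotone fun n : ℕ => f n x := by
    intro x m k hmk
    show f m x ≤ f k x
    rcases le_or_gt 0 x with hx | hx
    · rcases le_or_gt x m with hxm | hxm
      · have h1 : f m x = F x := Set.indicator_of_mem (Set.mem_Icc.mpr ⟨hx, hxm⟩) _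
        have h2 : f k x = F x := Set.indicator_of_mem
          (Set.mem_Icc.mpr ⟨hx, hxm.trans (by exact_mod_cast hmk)⟩) _
        rw [h1, h2]
      · have h1 : f m x = 0 := Set.indicator_of_notMem
          (fun hc => absurd (Set.mem_Icc.mp hc).2 (not_le.mpr hxm)) _
        rw [h1]; exact zero_le
    · have h1 : f m x = 0 := Set.indicator_of_notMem
        (fun hc => absurd (Set.mem_Icc.mp hc).1 (not_le.mpr hx)) _
      rw [h1]; exact zero_le
  have hsup : ∀ x : ℝ, (⨆ n : ℕ, f n x) = (Set.Ici (0:ℝ)).indicator F x := by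
    intro x
    rcases le_or_gt 0 x with hx | hx
    · rw [Set.indicator_of_mem (Set.mem_Ici.mpr hx)]
      apply le_antisymm
      · exact iSup_le fun n => Set.indicator_le_self _ _ x
      · obtain ⟨n, hn⟩ := exists_nat_ge x
        exact le_iSup_of_le n
          (le_of_eq (Set.indicator_of_mem (Set.mem_Icc.mpr ⟨hx, hn⟩) _).symm)
    · rw [Set.indicator_of_notMem (fun hc => absurd (Set.mem_Ici.mp hc) (not_le.mpr hx))]
      apply le_antisymm _ zero_le
      exact iSup_le fun n => le_of_eq
        (Set.indicator_of_notMem (fun hc => absurd (Set.mem_Icc.mp hc).1 (not_le.mpr hx)) _)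
  have hbound : ∀ n : ℕ, ∫⁻ x, f n x ≤ ENNReal.ofReal C := by
    intro n
    rw [hf]
    rw [lintegral_indicator measurableSet_Icc]
    have hInt : IntegrableOn h (Set.Icc (0:ℝ) (n:ℝ)) volume :=
      (hcont.mono Set.Icc_subset_Ici_self).integrableOn_compact isCompact_Icc
    have := MeasureTheory.ofReal_integral_eq_lintegral_ofReal hInt
      (Filter.Eventually.of_forall fun t => hnn t)
    rw [hF, ← this]
    apply ENNReal.ofReal_le_ofReal
    have : ∫ t in Set.Icc (0:ℝ) (n:ℝ), h t = ∫ u in (0:ℝ)..(n:ℝ), h u := by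
      rw [intervalIntegral.integral_of_le (by positivity), integral_Icc_eq_integral_Ioc]
    rw [this]
    exact hint n (by positivity)
  have key : ∫⁻ t in Set.Ici (0:ℝ), F t = ⨆ n : ℕ, ∫⁻ x, f n x := by
    rw [← lintegral_indicator measurableSet_Ici]
    have : ∀ x, (Set.Ici (0:ℝ)).indicator F x = ⨆ n : ℕ, f n x := fun x => (hsup x).symm
    rw [lintegral_congr this]
    exact lintegral_iSup' hmeas (Filter.Eventually.of_forall hmono)
  rw [key]
  exact iSup_le hbound

lemma lemB {h : ℝ → ℝ} {L : ℝ} (hL : 0 < L)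
    (hnn : ∀ t, 0 ≤ h t)
    (hlip : ∀ t u, 0 ≤ t → 0 ≤ u → |h t - h u| ≤ L * |t - u|)
    (hfin : ∫⁻ t in Set.Ici (0:ℝ), ENNReal.ofReal (h t) < ⊤) :
    Tendsto h atTop (nhds 0) := by
  rw [Metric.tendsto_atTop]
  intro ε hε
  by_contra hcon
  push_neg at hcon
  -- from hcon : ∀ N, ∃ t ≥ N, dist (h t) 0 ≥ ε
  have H : ∀ N : ℝ, ∃ t, N ≤ t ∧ ε ≤ h t := by
    intro N
    obtain ⟨t, ht, hd⟩ := hcon (max N 0)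
    refine ⟨t, le_trans (le_max_left _ _) ht, ?_⟩
    rw [Real.dist_eq, sub_zero, abs_of_nonneg (hnn t)] at hd
    exact hd
  set d : ℝ := ε / (2 * L) with hd
  have hdpos : 0 < d := by positivity
  -- construct sequence
  have Hc : ∀ N : ℝ, ∃ t : ℝ, N ≤ t ∧ ε ≤ h t := H
  choose pick hpick1 hpick2 using Hc
  let T : ℕ → ℝ := fun k => Nat.rec (pick d) (fun _ prev => pick (prev + d)) k
  have hT0 : d ≤ T 0 := hpick1 d
  have hTsucc : ∀ k, T k + d ≤ T (k + 1) := fun k => hpick1 (T k + d)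
  have hTval : ∀ k, ε ≤ h (T k) := by
    intro k
    cases k with
    | zero => exact hpick2 d
    | succ m => exact hpick2 (T m + d)
  have hTpos : ∀ k, d ≤ T k := by
    intro k
    induction k with
    | zero => exact hT0
    | succ m ih => calc d ≤ T m := ih
                        _ ≤ T m + d := le_add_of_nonneg_right hdpos.le
                        _ ≤ T (m+1) := hTsucc m
  -- per interval lower bound
  set c0 : ℝ≥0∞ := ENNReal.ofReal (ε/2) * ENNReal.ofReal d with hc0
  have hc0pos : c0 ≠ 0 := by
    rw [hc0]
    apply mul_ne_zero <;>
      simp [ENNReal.ofReal_eq_zero, not_le, half_pos hε, hdpos]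
  have hc0top : c0 ≠ ⊤ := by
    rw [hc0]; exact ENNReal.mul_ne_top ENNReal.ofReal_ne_top ENNReal.ofReal_ne_top
  have interval_bound : ∀ k, c0 ≤ ∫⁻ u in Set.Ioc (T k - d) (T k), ENNReal.ofReal (h u) := by
    intro k
    have hlow : ∀ u ∈ Set.Ioc (T k - d) (T k), ENNReal.ofReal (ε/2) ≤ ENNReal.ofReal (h u) := by
      intro u hu
      apply ENNReal.ofReal_le_ofReal
      have hu0 : 0 ≤ u := le_trans (by linarith [hTpos k]) hu.1.le
      have := hlip (T k) u (le_trans hdpos.le (hTpos k)) hu0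
      have habs : |T k - u| ≤ d := by
        rw [abs_of_nonneg (by linarith [hu.2])]
        linarith [hu.1]
      have hLd : L * |T k - u| ≤ L * d := by
        exact mul_le_mul_of_nonneg_left habs hL.le
      have hLdval : L * d = ε / 2 := by
        rw [hd]; field_simp
      have h1 : h (T k) - h u ≤ ε / 2 := by
        calc h (T k) - h u ≤ |h (T k) - h u| := le_abs_self _
          _ ≤ L * |T k - u| := this
          _ ≤ L * d := hLd
          _ = ε / 2 := hLdval
      linarith [hTval k]
    calc c0 = ENNReal.ofReal (ε/2) * volume (Set.Ioc (T k - d) (T k)) := by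
          rw [hc0, Real.volume_Ioc]
          congr 1
          congr 1
          ring
      _ = ∫⁻ _ in Set.Ioc (T k - d) (T k), ENNReal.ofReal (ε/2) := by
          rw [setLIntegral_const]
      _ ≤ ∫⁻ u in Set.Ioc (T k - d) (T k), ENNReal.ofReal (h u) := by
          apply lintegral_mono_ae
          exact (ae_restrict_iff' measurableSet_Ioc).mpr (ae_of_all _ hlow)
  -- cumulative bound by induction
  have cum : ∀ k : ℕ, (k + 1 : ℕ) * c0 ≤ ∫⁻ u in Set.Icc 0 (T k), ENNReal.ofReal (h u) := by
    intro k
    induction k with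
    | zero =>
      simp only [Nat.cast_one, one_mul, Nat.zero_add]
      calc c0 ≤ ∫⁻ u in Set.Ioc (T 0 - d) (T 0), ENNReal.ofReal (h u) := interval_bound 0
        _ ≤ ∫⁻ u in Set.Icc 0 (T 0), ENNReal.ofReal (h u) := by
            apply lintegral_mono_set
            intro u hu
            exact ⟨by linarith [hu.1, hTpos 0], hu.2⟩
    | succ m ih =>
      have hsplit : Set.Icc (0:ℝ) (T (m+1)) = Set.Icc 0 (T m) ∪ Set.Ioc (T m) (T (m+1)) := by
        rw [Set.Icc_union_Ioc_eq_Icc (by linarith [hTpos m]) (by linarith [hTsucc m, hdpos])]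
      rw [hsplit, lintegral_union measurableSet_Ioc]
      · have hsub : Set.Ioc (T (m+1) - d) (T (m+1)) ⊆ Set.Ioc (T m) (T (m+1)) := by
          intro u hu
          exact ⟨lt_of_le_of_lt (by linarith [hTsucc m]) hu.1, hu.2⟩
        have h2 : c0 ≤ ∫⁻ u in Set.Ioc (T m) (T (m+1)), ENNReal.ofReal (h u) :=
          le_trans (interval_bound (m+1)) (lintegral_mono_set hsub)
        calc ((m + 1 + 1 : ℕ) : ℝ≥0∞) * c0 = ((m+1 : ℕ) : ℝ≥0∞) * c0 + c0 := by
              push_cast; ring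
          _ ≤ _ := add_le_add ih h2
      · exact Set.disjoint_left.mpr (fun u hu hu' => absurd hu.2 (not_le.mpr hu'.1))
  -- contradiction
  have hle : ∀ k : ℕ, (k + 1 : ℕ) * c0 ≤ ∫⁻ t in Set.Ici (0:ℝ), ENNReal.ofReal (h t) := by
    intro k
    refine le_trans (cum k) (lintegral_mono_set ?_)
    intro u hu; exact hu.1
  set I := ∫⁻ t in Set.Ici (0:ℝ), ENNReal.ofReal (h t) with hI
  have hIdiv : I / c0 ≠ ⊤ := by
    intro hdiv
    rw [ENNReal.div_eq_top] at hdiv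
    rcases hdiv with ⟨_, hc⟩ | ⟨hIt, _⟩
    · exact hc0pos hc
    · exact absurd hIt (ne_of_lt hfin)
  obtain ⟨k, hk⟩ := ENNReal.exists_nat_gt hIdiv
  have : ((k:ℝ≥0∞)) ≤ I / c0 := by
    rw [ENNReal.le_div_iff_mul_le (Or.inl hc0pos) (Or.inl hc0top)]
    calc (k : ℝ≥0∞) * c0 ≤ ((k + 1 : ℕ) : ℝ≥0∞) * c0 := by
          apply mul_le_mul_left
          exact_mod_cast Nat.le_succ k
      _ ≤ I := hle k
  exact absurd this (not_le.mpr hk)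

set_option maxHeartbeats 2000000 in
/-- momentum adaptation law for linearly parameterized dynamics.
The error dynamics `ṡ = -η s + Y(t)ᵀ(â - a)` together with the momentum adaptation law
`v̂̇ = -γ Y(t)ᵀ s`, `â̇ = β 𝒩(t) (v̂ - â)`, `𝒩(t) = 1 + μ ‖Y t‖²`, `μ > γ/(ηβ)`, guarantees
that all trajectories remain bounded, `s ∈ L∞ ∩ L²`, `(â - v̂) ∈ L²`, `s → 0` and `x → x_d`. -/
theorem momentum_adaptation_linear
    {n p : ℕ}
    (x xd : ℝ → EuclideanSpace ℝ (Fin n))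
    (s : ℝ → ℝ)
    (Y : ℝ → EuclideanSpace ℝ (Fin p))
    (a : EuclideanSpace ℝ (Fin p))
    (ahat vhat : ℝ → EuclideanSpace ℝ (Fin p))
    (η γ β μ : ℝ)
    (hη : 0 < η) (hγ : 0 < γ) (hβ : 0 < β)
    (hμ : γ / (η * β) < μ)
    -- error dynamics ṡ = -η s + Y (â - a)
    (hs : ∀ t, 0 ≤ t → HasDerivAt s (-η * s t + ⟪Y t, ahat t - a⟫) t)
    -- momentum adaptation law
    (hv : ∀ t, 0 ≤ t → HasDerivAt vhat (-((γ * s t) • Y t)) t)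
    (ha : ∀ t, 0 ≤ t →
      HasDerivAt ahat ((β * (1 + μ * ‖Y t‖ ^ 2)) • (vhat t - ahat t)) t)
    -- the regressor Y(x, t) is locally bounded in x uniformly in t
    (hYloc : ∀ R : ℝ, ∃ M : ℝ, ∀ t, 0 ≤ t → ‖x t‖ ≤ R → ‖Y t‖ ≤ M)
    -- boundedness of s implies boundedness of x
    (hsx : InLinf s → InLinf x)
    -- s → 0 implies x → x_d
    (hxd : Tendsto s atTop (nhds 0) →
      Tendsto (fun t => x t - xd t) atTop (nhds 0)) :
    InLinf x ∧ InLinf vhat ∧ InLinf ahat ∧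
    (InLinf s ∧ InL2 s) ∧
    InL2 (fun t => ahat t - vhat t) ∧
    Tendsto s atTop (nhds 0) ∧
    Tendsto (fun t => x t - xd t) atTop (nhds 0) := by
  -- constants
  have hμ' : γ < β * μ * η := by
    have hb : 0 < η * β := mul_pos hη hβ
    have h1 := (div_lt_iff₀ hb).mp hμ
    nlinarith
  obtain ⟨c, lam, hc, hlam0, hlamlt, key⟩ :
      ∃ c lam : ℝ, 0 < c ∧ 0 < lam ∧ lam < 2*η ∧ lam * (2*c*β*μ) = (1+c*γ)^2 := by
    refine ⟨(2*(β*μ*η) - γ)/γ^2, 2*(β*μ*η)*η/(2*(β*μ*η) - γ),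
      div_pos (by nlinarith) (by positivity),
      div_pos (by nlinarith) (by nlinarith), ?_, ?_⟩
    · rw [div_lt_iff₀ (by nlinarith)]; nlinarith
    · have h1 : γ ≠ 0 := ne_of_gt hγ
      have h2 : 2*(β*μ*η) - γ ≠ 0 := by nlinarith
      have h2' : 2*β*μ*η - γ ≠ 0 := by nlinarith
      field_simp
      ring
  obtain ⟨δ, hδdef, hδ⟩ : ∃ δ : ℝ, δ = 2*η - lam ∧ 0 < δ := ⟨_, rfl, by linarith⟩
  have h1cγ : 0 < 1 + c*γ := by nlinarith
  -- derivative shorthand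
  obtain ⟨sd, hsddef⟩ : ∃ sd : ℝ → ℝ, sd = fun t => -η * s t + ⟪Y t, ahat t - a⟫ := ⟨_, rfl⟩
  -- Lyapunov function and dissipation rate
  obtain ⟨W, hWdef⟩ : ∃ W : ℝ → ℝ,
    W = fun t => (s t)^2 + (1/γ)*‖vhat t - a‖^2 + c*‖ahat t - vhat t‖^2 := ⟨_, rfl⟩
  obtain ⟨g, hgdef⟩ : ∃ g : ℝ → ℝ,
    g = fun t => δ * (s t)^2 + 2*c*β*‖ahat t - vhat t‖^2 := ⟨_, rfl⟩
  have hgnn : ∀ t, 0 ≤ g t := by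
    intro t
    rw [hgdef]; dsimp only
    have h3 := sq_nonneg ‖ahat t - vhat t‖
    nlinarith [sq_nonneg (s t), mul_nonneg (mul_nonneg (mul_nonneg (by norm_num : (0:ℝ) ≤ 2) hc.le) hβ.le) h3]
  have hWnn : ∀ t, 0 ≤ W t := by
    intro t
    rw [hWdef]; dsimp only
    have h2 := sq_nonneg ‖vhat t - a‖
    have h3 := sq_nonneg ‖ahat t - vhat t‖
    nlinarith [sq_nonneg (s t), mul_nonneg hc.le h3,
      mul_nonneg (le_of_lt (by positivity : (0:ℝ) < 1/γ)) h2]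
  -- derivative of W
  obtain ⟨Wd, hWddef⟩ : ∃ Wd : ℝ → ℝ, Wd = fun t =>
    2 * s t * sd t
    + (1/γ) * (⟪vhat t - a, -((γ * s t) • Y t)⟫ + ⟪-((γ * s t) • Y t), vhat t - a⟫)
    + c * (⟪ahat t - vhat t, (β * (1 + μ * ‖Y t‖ ^ 2)) • (vhat t - ahat t) - -((γ * s t) • Y t)⟫
        + ⟪(β * (1 + μ * ‖Y t‖ ^ 2)) • (vhat t - ahat t) - -((γ * s t) • Y t), ahat t - vhat t⟫)
    := ⟨_, rfl⟩
  have hWd : ∀ t, 0 ≤ t → HasDerivAt W (Wd t) t := by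
    intro t ht
    have h1 : HasDerivAt (fun τ => (s τ)^2) (2 * s t * sd t) t := by
      have := (hs t ht).fun_pow 2
      rw [hsddef]
      simpa [mul_comm, mul_assoc, mul_left_comm] using this
    have hvsub : HasDerivAt (fun τ => vhat τ - a) (-((γ * s t) • Y t)) t :=
      (hv t ht).sub_const a
    have h2 : HasDerivAt (fun τ => ‖vhat τ - a‖^2)
        (⟪vhat t - a, -((γ * s t) • Y t)⟫ + ⟪-((γ * s t) • Y t), vhat t - a⟫) t := by
      have := hvsub.inner ℝ hvsub
      simpa only [real_inner_self_eq_norm_sq] using this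
    have hesub : HasDerivAt (fun τ => ahat τ - vhat τ)
        ((β * (1 + μ * ‖Y t‖ ^ 2)) • (vhat t - ahat t) - -((γ * s t) • Y t)) t :=
      (ha t ht).sub (hv t ht)
    have h3 : HasDerivAt (fun τ => ‖ahat τ - vhat τ‖^2)
        (⟪ahat t - vhat t, (β * (1 + μ * ‖Y t‖ ^ 2)) • (vhat t - ahat t) - -((γ * s t) • Y t)⟫
        + ⟪(β * (1 + μ * ‖Y t‖ ^ 2)) • (vhat t - ahat t) - -((γ * s t) • Y t), ahat t - vhat t⟫)
        t := by
      have := hesub.inner ℝ hesub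
      simpa only [real_inner_self_eq_norm_sq] using this
    rw [hWdef, hWddef]
    exact (h1.add (h2.const_mul (1/γ))).add (h3.const_mul c)
  -- dissipation inequality
  have hWdle : ∀ t, Wd t + g t ≤ 0 := by
    intro t
    have hQ : |⟪Y t, ahat t - vhat t⟫| ≤ ‖Y t‖ * ‖ahat t - vhat t‖ := abs_real_inner_le_norm _ _
    have hAB : ⟪Y t, ahat t - a⟫ - ⟪vhat t - a, Y t⟫ = ⟪Y t, ahat t - vhat t⟫ := by
      rw [real_inner_comm (Y t) (vhat t - a), ← inner_sub_right]
      congr 1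
      abel
    have e1 : ⟪vhat t - a, -((γ * s t) • Y t)⟫ = -(γ * s t * ⟪vhat t - a, Y t⟫) := by
      rw [inner_neg_right, real_inner_smul_right]
    have e1' : ⟪-((γ * s t) • Y t), vhat t - a⟫ = -(γ * s t * ⟪vhat t - a, Y t⟫) := by
      rw [inner_neg_left, real_inner_smul_left, real_inner_comm]
    have e2 : ⟪ahat t - vhat t, (β * (1 + μ * ‖Y t‖ ^ 2)) • (vhat t - ahat t) - -((γ * s t) • Y t)⟫
        = -(β * (1 + μ * ‖Y t‖ ^ 2) * ‖ahat t - vhat t‖^2)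
          + γ * s t * ⟪Y t, ahat t - vhat t⟫ := by
      rw [inner_sub_right, inner_neg_right, real_inner_smul_right, real_inner_smul_right]
      have hne : (vhat t - ahat t) = -(ahat t - vhat t) := by abel
      rw [hne, inner_neg_right, real_inner_self_eq_norm_sq,
        real_inner_comm (Y t) (ahat t - vhat t)]
      ring
    have e2' : ⟪(β * (1 + μ * ‖Y t‖ ^ 2)) • (vhat t - ahat t) - -((γ * s t) • Y t), ahat t - vhat t⟫
        = -(β * (1 + μ * ‖Y t‖ ^ 2) * ‖ahat t - vhat t‖^2)
          + γ * s t * ⟪Y t, ahat t - vhat t⟫ := by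
      rw [inner_sub_left, inner_neg_left, real_inner_smul_left, real_inner_smul_left]
      have hne : (vhat t - ahat t) = -(ahat t - vhat t) := by abel
      rw [hne, inner_neg_left, real_inner_self_eq_norm_sq]
      ring
    have expand : Wd t + g t =
        -lam * (s t)^2 + 2*(1+c*γ)*(s t * ⟪Y t, ahat t - vhat t⟫)
          - 2*c*β*μ*(‖Y t‖^2*‖ahat t - vhat t‖^2) := by
      rw [hWddef, hgdef]
      simp only [hsddef, e1, e1', e2, e2']
      rw [← hAB, hδdef]
      have h1 : γ ≠ 0 := ne_of_gt hγ
      field_simp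
      ring
    rw [expand]
    have final : ∀ st q yn en : ℝ, |q| ≤ yn * en →
        -lam * st^2 + 2*(1+c*γ)*(st*q) - 2*c*β*μ*(yn^2*en^2) ≤ 0 := by
      intro st q yn en hq
      have hstQ : st * q ≤ |st| * (yn * en) := by
        calc st * q ≤ |st * q| := le_abs_self _
          _ = |st| * |q| := abs_mul _ _
          _ ≤ |st| * (yn * en) := mul_le_mul_of_nonneg_left hq (abs_nonneg _)
      have hsq := sq_nonneg (lam * |st| - (1+c*γ)*(yn * en))
      have hsa : |st|^2 = st^2 := sq_abs st
      have h2 : 2*(1+c*γ)*lam*(st*q) ≤ 2*(1+c*γ)*lam*((|st|)*(yn*en)) :=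
        mul_le_mul_of_nonneg_left hstQ
          (by nlinarith [h1cγ, hlam0] : (0:ℝ) ≤ 2*(1+c*γ)*lam)
      have hmain : lam * (-lam * st^2 + 2*(1+c*γ)*(st*q) - 2*c*β*μ*(yn^2*en^2)) ≤ 0 := by
        have hexp : lam * (-lam * st^2 + 2*(1+c*γ)*(st*q) - 2*c*β*μ*(yn^2*en^2))
            = -(lam*(|st|) - (1+c*γ)*(yn*en))^2
              + (2*(1+c*γ)*lam*(st*q) - 2*(1+c*γ)*lam*((|st|)*(yn*en)))
              + ((1+c*γ)^2 - lam*(2*c*β*μ)) * (yn*en)^2 := by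
          rw [← hsa]; ring
        rw [hexp]
        have t1 : -(lam*(|st|) - (1+c*γ)*(yn*en))^2 ≤ 0 := neg_nonpos_of_nonneg hsq
        have t2 : 2*(1+c*γ)*lam*(st*q) - 2*(1+c*γ)*lam*((|st|)*(yn*en)) ≤ 0 := by linarith
        have t3 : ((1+c*γ)^2 - lam*(2*c*β*μ)) * (yn*en)^2 = 0 := by rw [key]; ring
        linarith
      by_contra hP
      push_neg at hP
      have hposmul := mul_pos hlam0 hP
      linarith
    exact final (s t) ⟪Y t, ahat t - vhat t⟫ ‖Y t‖ ‖ahat t - vhat t‖ hQ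
  -- continuity facts
  have hscont : ∀ t : ℝ, 0 ≤ t → ContinuousAt s t := fun t ht => (hs t ht).continuousAt
  have hecont : ∀ t : ℝ, 0 ≤ t → ContinuousAt (fun τ => ahat τ - vhat τ) t :=
    fun t ht => ((ha t ht).sub (hv t ht)).continuousAt
  have hgca : ∀ t : ℝ, 0 ≤ t → ContinuousAt g t := by
    intro t ht
    rw [hgdef]
    exact (((hscont t ht).pow 2).const_mul δ).add
      ((((hecont t ht).norm).pow 2).const_mul (2*c*β))
  have hgcont : ContinuousOn g (Set.Ici 0) :=
    fun t ht => (hgca t ht).continuousWithinAt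
  have hWcont : ContinuousOn W (Set.Ici 0) := by
    intro t ht
    apply ContinuousAt.continuousWithinAt
    rw [hWdef]
    have hvc : ContinuousAt (fun τ => vhat τ - a) t := ((hv t ht).sub_const a).continuousAt
    exact (((hscont t ht).pow 2).add (((hvc.norm).pow 2).const_mul (1/γ))).add
      ((((hecont t ht).norm).pow 2).const_mul c)
  -- primitive of g
  obtain ⟨G, hGdef⟩ : ∃ G : ℝ → ℝ, G = fun τ => ∫ u in (0:ℝ)..τ, g u := ⟨_, rfl⟩
  have hgint : ∀ τ : ℝ, 0 ≤ τ → IntervalIntegrable g volume 0 τ := by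
    intro τ hτ
    apply ContinuousOn.intervalIntegrable
    rw [Set.uIcc_of_le hτ]
    exact hgcont.mono Set.Icc_subset_Ici_self
  have hGcont : ContinuousOn G (Set.Ici 0) := by
    intro t ht
    have ht0 : (0:ℝ) ≤ t := ht
    have hint : IntegrableOn g (Set.uIcc (0:ℝ) (t+1)) volume := by
      rw [Set.uIcc_of_le (by linarith : (0:ℝ) ≤ t+1)]
      exact (hgcont.mono Set.Icc_subset_Ici_self).integrableOn_compact isCompact_Icc
    have hcw : ContinuousWithinAt G (Set.uIcc (0:ℝ) (t+1)) t := by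
      rw [hGdef]
      exact intervalIntegral.continuousOn_primitive_interval hint t
        (by rw [Set.uIcc_of_le (by linarith : (0:ℝ) ≤ t+1)]; exact ⟨ht0, by linarith⟩)
    apply hcw.mono_of_mem_nhdsWithin
    have h1 : Set.Ici (0:ℝ) ∩ Set.Iio (t+1) ∈ nhdsWithin t (Set.Ici 0) := by
      exact Filter.inter_mem self_mem_nhdsWithin
        (mem_nhdsWithin_of_mem_nhds (Iio_mem_nhds (by linarith)))
    apply Filter.mem_of_superset h1
    intro u hu
    rw [Set.uIcc_of_le (by linarith : (0:ℝ) ≤ t+1)]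
    exact ⟨hu.1, hu.2.le⟩
  have hGD : ∀ t : ℝ, 0 < t → HasDerivAt G (g t) t := by
    intro t ht
    rw [hGdef]
    apply intervalIntegral.integral_hasDerivAt_right (hgint t ht.le)
    · exact ⟨Set.Ioi 0, Ioi_mem_nhds ht,
        (hgcont.mono Set.Ioi_subset_Ici_self).aestronglyMeasurable measurableSet_Ioi⟩
    · exact hgca t ht.le
  -- monotone decrease of W + G
  have hFanti : AntitoneOn (fun τ => W τ + G τ) (Set.Ici 0) := by
    apply antitoneOn_of_deriv_nonpos (convex_Ici 0) (hWcont.add hGcont)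
    · intro t ht
      rw [interior_Ici] at ht
      exact ((hWd t ht.le).add (hGD t ht)).differentiableAt.differentiableWithinAt
    · intro t ht
      rw [interior_Ici] at ht
      rw [((hWd t ht.le).add (hGD t ht)).deriv]
      exact hWdle t
  have hWexp : ∀ t, W t = (s t)^2 + (1/γ)*‖vhat t - a‖^2 + c*‖ahat t - vhat t‖^2 :=
    fun t => by rw [hWdef]
  have hFle : ∀ t : ℝ, 0 ≤ t → W t + G t ≤ W 0 := by
    intro t ht
    have h0 := hFanti Set.self_mem_Ici ht ht
    have hG0 : G 0 = 0 := by rw [hGdef]; exact intervalIntegral.integral_same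
    simp only at h0
    linarith [h0]
  have hGnn : ∀ t : ℝ, 0 ≤ t → 0 ≤ G t := by
    intro t ht
    rw [hGdef]
    exact intervalIntegral.integral_nonneg ht (fun u _ => hgnn u)
  have hS0 : 0 ≤ W 0 := hWnn 0
  have hWle : ∀ t, 0 ≤ t → W t ≤ W 0 := by
    intro t ht; have := hFle t ht; have := hGnn t ht; linarith
  have hGle : ∀ t, 0 ≤ t → (∫ u in (0:ℝ)..t, g u) ≤ W 0 := by
    intro t ht
    have h := hFle t ht
    have := hWnn t
    rw [hGdef] at h; dsimp only at h
    linarith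
  -- component bounds
  have hs2 : ∀ t, 0 ≤ t → (s t)^2 ≤ W 0 := by
    intro t ht
    have h1 := hWle t ht
    rw [hWexp t] at h1
    nlinarith [sq_nonneg ‖vhat t - a‖, sq_nonneg ‖ahat t - vhat t‖,
      mul_nonneg hc.le (sq_nonneg ‖ahat t - vhat t‖),
      mul_nonneg (le_of_lt (by positivity : (0:ℝ) < 1/γ)) (sq_nonneg ‖vhat t - a‖)]
  have hv2 : ∀ t, 0 ≤ t → ‖vhat t - a‖^2 ≤ γ * W 0 := by
    intro t ht
    have h1 := hWle t ht
    rw [hWexp t] at h1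
    have h2 : (1/γ)*‖vhat t - a‖^2 ≤ W 0 := by
      nlinarith [sq_nonneg (s t), mul_nonneg hc.le (sq_nonneg ‖ahat t - vhat t‖)]
    calc ‖vhat t - a‖^2 = γ * ((1/γ)*‖vhat t - a‖^2) := by field_simp
      _ ≤ γ * W 0 := mul_le_mul_of_nonneg_left h2 hγ.le
  have he2 : ∀ t, 0 ≤ t → ‖ahat t - vhat t‖^2 ≤ W 0 / c := by
    intro t ht
    have h1 := hWle t ht
    rw [hWexp t] at h1
    rw [le_div_iff₀ hc]
    nlinarith [sq_nonneg (s t),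
      mul_nonneg (le_of_lt (by positivity : (0:ℝ) < 1/γ)) (sq_nonneg ‖vhat t - a‖)]
  have hsb : ∀ t, 0 ≤ t → |s t| ≤ Real.sqrt (W 0) := by
    intro t ht
    rw [← Real.sqrt_sq_eq_abs]
    exact Real.sqrt_le_sqrt (hs2 t ht)
  have hsinf : InLinf s := ⟨Real.sqrt (W 0), fun t ht => by
    rw [Real.norm_eq_abs]; exact hsb t ht⟩
  obtain ⟨Rx, hRx⟩ := hsx hsinf
  obtain ⟨M, hM⟩ := hYloc Rx
  have hM0nn : (0:ℝ) ≤ max M 0 := le_max_right _ _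
  have hYb : ∀ t, 0 ≤ t → ‖Y t‖ ≤ max M 0 :=
    fun t ht => le_trans (hM t ht (hRx t ht)) (le_max_left _ _)
  have hvb : ∀ t, 0 ≤ t → ‖vhat t - a‖ ≤ Real.sqrt (γ * W 0) := by
    intro t ht
    rw [← Real.sqrt_sq (norm_nonneg (vhat t - a))]
    exact Real.sqrt_le_sqrt (hv2 t ht)
  have heb : ∀ t, 0 ≤ t → ‖ahat t - vhat t‖ ≤ Real.sqrt (W 0 / c) := by
    intro t ht
    rw [← Real.sqrt_sq (norm_nonneg (ahat t - vhat t))]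
    exact Real.sqrt_le_sqrt (he2 t ht)
  have hvinf : InLinf vhat := by
    refine ⟨Real.sqrt (γ * W 0) + ‖a‖, fun t ht => ?_⟩
    have hrw : vhat t = (vhat t - a) + a := by abel
    rw [hrw]
    exact le_trans (norm_add_le _ _) (add_le_add_left (hvb t ht) _)
  have hainf : InLinf ahat := by
    refine ⟨Real.sqrt (W 0 / c) + (Real.sqrt (γ * W 0) + ‖a‖), fun t ht => ?_⟩
    have hrw : ahat t = (ahat t - vhat t) + vhat t := by abel
    rw [hrw]
    apply le_trans (norm_add_le _ _)
    apply add_le_add (heb t ht)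
    have hrw2 : vhat t = (vhat t - a) + a := by abel
    rw [hrw2]
    exact le_trans (norm_add_le _ _) (add_le_add_left (hvb t ht) _)
  -- L² bounds
  have hscontOn : ContinuousOn (fun t => (s t)^2) (Set.Ici 0) :=
    fun t ht => ((hscont t ht).pow 2).continuousWithinAt
  have hecontOn : ContinuousOn (fun t => ‖ahat t - vhat t‖^2) (Set.Ici 0) :=
    fun t ht => (((hecont t ht).norm).pow 2).continuousWithinAt
  have hintS : ∀ t, 0 ≤ t → ∫ u in (0:ℝ)..t, (s u)^2 ≤ W 0 / δ := by
    intro t ht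
    have hint1 : IntervalIntegrable (fun u => (s u)^2) volume 0 t := by
      apply ContinuousOn.intervalIntegrable
      rw [Set.uIcc_of_le ht]
      exact (hscontOn.mono Set.Icc_subset_Ici_self)
    have hmono : ∫ u in (0:ℝ)..t, δ * (s u)^2 ≤ ∫ u in (0:ℝ)..t, g u := by
      apply intervalIntegral.integral_mono_on ht (hint1.const_mul δ) (hgint t ht)
      intro u _
      rw [hgdef]; dsimp only
      nlinarith [mul_nonneg (mul_nonneg (mul_nonneg (by norm_num : (0:ℝ) ≤ 2) hc.le) hβ.le)
        (sq_nonneg ‖ahat u - vhat u‖)]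
    rw [intervalIntegral.integral_const_mul] at hmono
    rw [le_div_iff₀ hδ]
    calc (∫ u in (0:ℝ)..t, (s u)^2) * δ = δ * ∫ u in (0:ℝ)..t, (s u)^2 := mul_comm _ _
      _ ≤ ∫ u in (0:ℝ)..t, g u := hmono
      _ ≤ W 0 := hGle t ht
  have hintE : ∀ t, 0 ≤ t → ∫ u in (0:ℝ)..t, ‖ahat u - vhat u‖^2 ≤ W 0 / (2*c*β) := by
    intro t ht
    have hint1 : IntervalIntegrable (fun u => ‖ahat u - vhat u‖^2) volume 0 t := by
      apply ContinuousOn.intervalIntegrable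
      rw [Set.uIcc_of_le ht]
      exact (hecontOn.mono Set.Icc_subset_Ici_self)
    have hmono : ∫ u in (0:ℝ)..t, (2*c*β) * ‖ahat u - vhat u‖^2 ≤ ∫ u in (0:ℝ)..t, g u := by
      apply intervalIntegral.integral_mono_on ht (hint1.const_mul (2*c*β)) (hgint t ht)
      intro u _
      rw [hgdef]; dsimp only
      nlinarith [mul_nonneg hδ.le (sq_nonneg (s u))]
    rw [intervalIntegral.integral_const_mul] at hmono
    have h2cβ : (0:ℝ) < 2*c*β := by positivity
    rw [le_div_iff₀ h2cβ]
    calc (∫ u in (0:ℝ)..t, ‖ahat u - vhat u‖^2) * (2*c*β)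
        = (2*c*β) * ∫ u in (0:ℝ)..t, ‖ahat u - vhat u‖^2 := mul_comm _ _
      _ ≤ ∫ u in (0:ℝ)..t, g u := hmono
      _ ≤ W 0 := hGle t ht
  have hlintS : ∫⁻ t in Set.Ici (0:ℝ), ENNReal.ofReal ((s t)^2) ≤ ENNReal.ofReal (W 0 / δ) :=
    lemA hscontOn (fun t => sq_nonneg _) hintS
  have hL2s : InL2 s := by
    unfold InL2
    calc ∫⁻ t in Set.Ici (0:ℝ), ENNReal.ofReal (‖s t‖^2)
        = ∫⁻ t in Set.Ici (0:ℝ), ENNReal.ofReal ((s t)^2) := by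
          apply lintegral_congr
          intro t
          rw [Real.norm_eq_abs, sq_abs]
      _ ≤ ENNReal.ofReal (W 0 / δ) := hlintS
      _ < ⊤ := ENNReal.ofReal_lt_top
  have hL2e : InL2 (fun t => ahat t - vhat t) := by
    unfold InL2
    calc ∫⁻ t in Set.Ici (0:ℝ), ENNReal.ofReal (‖ahat t - vhat t‖^2)
        ≤ ENNReal.ofReal (W 0 / (2*c*β)) := lemA hecontOn (fun t => sq_nonneg _) hintE
      _ < ⊤ := ENNReal.ofReal_lt_top
  -- Barbalat
  have hCann : (0:ℝ) ≤ Real.sqrt (W 0 / c) + Real.sqrt (γ * W 0) :=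
    add_nonneg (Real.sqrt_nonneg _) (Real.sqrt_nonneg _)
  have hab : ∀ t, 0 ≤ t → ‖ahat t - a‖ ≤ Real.sqrt (W 0 / c) + Real.sqrt (γ * W 0) := by
    intro t ht
    have hrw : ahat t - a = (ahat t - vhat t) + (vhat t - a) := by abel
    rw [hrw]
    exact le_trans (norm_add_le _ _) (add_le_add (heb t ht) (hvb t ht))
  have hsqrtS : (0:ℝ) ≤ Real.sqrt (W 0) := Real.sqrt_nonneg _
  obtain ⟨B, hBdef⟩ : ∃ B : ℝ,
    B = η * Real.sqrt (W 0) + (max M 0) * (Real.sqrt (W 0 / c) + Real.sqrt (γ * W 0)) := ⟨_, rfl⟩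
  have hBnn : 0 ≤ B := by
    rw [hBdef]
    exact add_nonneg (mul_nonneg hη.le hsqrtS) (mul_nonneg hM0nn hCann)
  obtain ⟨L, hLdef⟩ : ∃ L : ℝ, L = 2 * Real.sqrt (W 0) * B + 1 := ⟨_, rfl⟩
  have hLpos : 0 < L := by
    rw [hLdef]
    nlinarith
  have hsdb : ∀ t, 0 ≤ t → |sd t| ≤ B := by
    intro t ht
    rw [hsddef, hBdef]
    calc |-η * s t + ⟪Y t, ahat t - a⟫|
        ≤ |(-η) * s t| + |⟪Y t, ahat t - a⟫| := abs_add_le _ _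
      _ = η * |s t| + |⟪Y t, ahat t - a⟫| := by rw [abs_mul, abs_neg, abs_of_pos hη]
      _ ≤ η * Real.sqrt (W 0) + ‖Y t‖ * ‖ahat t - a‖ :=
          add_le_add (mul_le_mul_of_nonneg_left (hsb t ht) hη.le) (abs_real_inner_le_norm _ _)
      _ ≤ η * Real.sqrt (W 0)
            + (max M 0) * (Real.sqrt (W 0 / c) + Real.sqrt (γ * W 0)) := by
          have := mul_le_mul (hYb t ht) (hab t ht) (norm_nonneg _) hM0nn
          linarith
  have hderivb : ∀ t ∈ Set.Ici (0:ℝ), ‖2 * s t * sd t‖ ≤ L := by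
    intro t ht
    rw [Real.norm_eq_abs, abs_mul, abs_mul, (by norm_num : |(2:ℝ)| = 2)]
    have h1 := hsb t ht
    have h2 := hsdb t ht
    have h3 := mul_le_mul h1 h2 (abs_nonneg _) hsqrtS
    rw [hLdef]
    nlinarith [abs_nonneg (s t), abs_nonneg (sd t)]
  have hlip : ∀ t u, 0 ≤ t → 0 ≤ u → |(s t)^2 - (s u)^2| ≤ L * |t - u| := by
    intro t u ht hu
    have hder : ∀ τ ∈ Set.Ici (0:ℝ),
        HasDerivWithinAt (fun w => (s w)^2) (2 * s τ * sd τ) (Set.Ici 0) τ := by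
      intro τ hτ
      have h1 : HasDerivAt (fun w => (s w)^2) (2 * s τ * sd τ) τ := by
        have := (hs τ hτ).fun_pow 2
        rw [hsddef]
        simpa [mul_comm, mul_assoc, mul_left_comm] using this
      exact h1.hasDerivWithinAt
    have := Convex.norm_image_sub_le_of_norm_hasDerivWithin_le hder hderivb (convex_Ici 0) hu ht
    simpa [Real.norm_eq_abs] using this
  have hsq0 : Tendsto (fun t => (s t)^2) atTop (nhds 0) := by
    apply lemB hLpos (fun t => sq_nonneg _) hlip
    exact lt_of_le_of_lt hlintS ENNReal.ofReal_lt_top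
  have hsten : Tendsto s atTop (nhds 0) := by
    rw [tendsto_zero_iff_abs_tendsto_zero]
    have hcomp := (Real.continuous_sqrt.tendsto' 0 0 (by simp)).comp hsq0
    have : (Real.sqrt ∘ fun t => (s t)^2) = fun t => |s t| := by
      funext t
      simp [Function.comp, Real.sqrt_sq_eq_abs]
    rwa [this] at hcomp
  exact ⟨⟨Rx, hRx⟩, hvinf, hainf, ⟨hsinf, hL2s⟩, hL2e, hsten, hxd hsten⟩

end
end

section
/- Consider the linearly parameterized error dynamics ṡ = −η s + Y(t)(â − a) with η > 0, together with the composite adaptation law â̇ = −P Y(t)ᵀ(γ s + κ Y(t)(â − a)), where P = Pᵀ > 0 is a constant positive definite matrix and γ, κ > 0. Then all trajectories (x, â) remain bounded, s ∈ L² ∩ L∞, the function approximation error f̃ = Y(â − a) ∈ L², s(t) → 0 as t → ∞, and x(t) → x_d(t). -/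
open MeasureTheory Filter
open scoped RealInnerProductSpace ENNReal

noncomputable section

lemma posdef_lower_bound {p : ℕ} (Q : EuclideanSpace ℝ (Fin p) →L[ℝ] EuclideanSpace ℝ (Fin p))
    (h : ∀ v : EuclideanSpace ℝ (Fin p), v ≠ 0 → 0 < ⟪v, Q v⟫) :
    ∃ μ : ℝ, 0 < μ ∧ ∀ v : EuclideanSpace ℝ (Fin p), μ * ‖v‖ ^ 2 ≤ ⟪v, Q v⟫ := by
  have hfc : Continuous fun v : EuclideanSpace ℝ (Fin p) => ⟪v, Q v⟫ :=
    continuous_id.inner Q.continuous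
  rcases (Metric.sphere (0 : EuclideanSpace ℝ (Fin p)) 1).eq_empty_or_nonempty with hemp | hne
  · refine ⟨1, one_pos, fun v => ?_⟩
    have hv : v = 0 := by
      by_contra hv
      have : (‖v‖⁻¹ • v) ∈ Metric.sphere (0 : EuclideanSpace ℝ (Fin p)) 1 := by
        simp [norm_smul, abs_of_nonneg, inv_mul_cancel₀ (norm_ne_zero_iff.2 hv)]
      rw [hemp] at this; exact this
    simp [hv]
  · obtain ⟨v₀, hv₀, hmin⟩ := (isCompact_sphere (0 : EuclideanSpace ℝ (Fin p)) 1).exists_isMinOn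
      hne hfc.continuousOn
    have hv₀norm : ‖v₀‖ = 1 := by simpa using hv₀
    have hv₀ne : v₀ ≠ 0 := by intro h0; rw [h0] at hv₀norm; simp at hv₀norm
    refine ⟨⟪v₀, Q v₀⟫, h v₀ hv₀ne, fun v => ?_⟩
    rcases eq_or_ne v 0 with rfl | hv
    · simp
    · set u := ‖v‖⁻¹ • v with hu
      have hun : u ∈ Metric.sphere (0 : EuclideanSpace ℝ (Fin p)) 1 := by
        simp [hu, norm_smul, abs_of_nonneg, inv_mul_cancel₀ (norm_ne_zero_iff.2 hv)]
      have hle : ⟪v₀, Q v₀⟫ ≤ ⟪u, Q u⟫ := hmin hun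
      have hscale : ⟪u, Q u⟫ = (‖v‖⁻¹)^2 * ⟪v, Q v⟫ := by
        rw [hu, Q.map_smul, real_inner_smul_left, real_inner_smul_right]; ring
      have hvn : (0:ℝ) < ‖v‖ := norm_pos_iff.2 hv
      rw [hscale] at hle
      have h2 := mul_le_mul_of_nonneg_left hle (by positivity : (0:ℝ) ≤ ‖v‖^2)
      have key : ‖v‖^2 * ((‖v‖⁻¹)^2 * ⟪v, Q v⟫) = ⟪v, Q v⟫ := by
        field_simp
      linarith [h2, key]

lemma sq_int_lipschitz_tendsto (f : ℝ → ℝ) (L K : ℝ)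
    (hcont : ContinuousOn f (Set.Ici 0))
    (hlip : ∀ a b : ℝ, 0 ≤ a → 0 ≤ b → |f b - f a| ≤ L * |b - a|)
    (hK : ∀ T : ℝ, 0 ≤ T → ∫ t in (0:ℝ)..T, (f t)^2 ≤ K) :
    Tendsto f atTop (nhds 0) := by
  have hL : 0 ≤ L := by
    have := hlip 0 1 le_rfl zero_le_one
    have h0 : (0:ℝ) ≤ |f 1 - f 0| := abs_nonneg _
    simpa using le_trans h0 this
  obtain ⟨L', hL'⟩ : ∃ L' : ℝ, L' = L + 1 := ⟨L + 1, rfl⟩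
  have hL'pos : 0 < L' := by rw [hL']; linarith
  have hlip' : ∀ a b : ℝ, 0 ≤ a → 0 ≤ b → |f b - f a| ≤ L' * |b - a| := fun a b ha hb =>
    (hlip a b ha hb).trans (by rw [hL']; nlinarith [abs_nonneg (b - a)])
  -- integrability of f^2 on subintervals of [0,∞)
  have hii : ∀ a b : ℝ, 0 ≤ a → 0 ≤ b → IntervalIntegrable (fun t => (f t)^2) volume a b := by
    intro a b ha hb
    apply ContinuousOn.intervalIntegrable
    exact ((hcont.mono (by
      intro t ht
      rcases Set.mem_uIcc.1 ht with h | h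
      · exact le_trans ha h.1
      · exact le_trans hb h.1)).pow 2)
  rw [Metric.tendsto_atTop]
  intro ε hε
  by_contra hcon
  push_neg at hcon
  have H : ∀ N : ℝ, ∃ t : ℝ, (max N 0 ≤ t) ∧ ε ≤ |f t| := by
    intro N
    obtain ⟨t, ht, htf⟩ := hcon (max N 0)
    exact ⟨t, ht, by simpa [Real.dist_eq] using htf⟩
  obtain ⟨δ, hδ⟩ : ∃ δ : ℝ, δ = ε / (2 * L') := ⟨_, rfl⟩
  have hδpos : 0 < δ := by rw [hδ]; positivity
  -- recursive sequence of bad times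
  let u : ℕ → ℝ := fun k => Nat.rec (H 0).choose (fun _ prev => (H (prev + δ)).choose) k
  have hu0 : 0 ≤ u 0 ∧ ε ≤ |f (u 0)| := by
    have := (H 0).choose_spec
    exact ⟨le_trans (le_max_right 0 0) this.1, this.2⟩
  have hustep : ∀ k, u k + δ ≤ u (k+1) ∧ ε ≤ |f (u (k+1))| := by
    intro k
    have := (H (u k + δ)).choose_spec
    exact ⟨le_trans (le_max_left _ 0) this.1, this.2⟩
  have hunn : ∀ k, 0 ≤ u k := by
    intro k
    induction k with
    | zero => exact hu0.1
    | succ k ih => nlinarith [(hustep k).1]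
  -- on [t, t+δ], |f| ≥ ε/2 whenever |f t| ≥ ε, t ≥ 0
  have hblock : ∀ t : ℝ, 0 ≤ t → ε ≤ |f t| →
      δ * (ε/2)^2 ≤ ∫ τ in t..(t+δ), (f τ)^2 := by
    intro t ht htf
    have h1 : ∀ τ ∈ Set.Icc t (t+δ), (ε/2)^2 ≤ (f τ)^2 := by
      intro τ hτ
      have hτ0 : 0 ≤ τ := le_trans ht hτ.1
      have hlb : ε/2 ≤ |f τ| := by
        have h2 := hlip' t τ ht hτ0
        have h3 : |τ - t| ≤ δ := by
          rw [abs_of_nonneg (by linarith [hτ.1])]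
          linarith [hτ.2]
        have h4 : |f τ - f t| ≤ L' * δ := h2.trans (by nlinarith)
        have h5 : L' * δ = ε / 2 := by
          field_simp [hδ]
          rw [hδ]; field_simp
        have h6 : |f t| - |f τ| ≤ |f τ - f t| := by
          have := abs_sub_abs_le_abs_sub (f t) (f τ)
          rwa [abs_sub_comm] at this
        linarith
      calc (ε/2)^2 ≤ |f τ|^2 := by
            apply pow_le_pow_left₀ (by positivity) hlb
        _ = (f τ)^2 := sq_abs _
    have h2 : (∫ τ in t..(t+δ), ((ε/2)^2 : ℝ)) ≤ ∫ τ in t..(t+δ), (f τ)^2 := by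
      apply intervalIntegral.integral_mono_on (by linarith)
        intervalIntegrable_const (hii t (t+δ) ht (by linarith))
      intro τ hτ; exact h1 τ hτ
    rw [intervalIntegral.integral_const, smul_eq_mul] at h2
    calc δ * (ε/2)^2 = (t + δ - t) * (ε/2)^2 := by ring
      _ ≤ _ := h2
  -- cumulative lower bound
  have hcum : ∀ N : ℕ, (N+1 : ℝ) * (δ * (ε/2)^2) ≤ ∫ t in (0:ℝ)..(u N + δ), (f t)^2 := by
    intro N
    induction N with
    | zero =>
      have h1 := hblock (u 0) (hunn 0) hu0.2
      have h2 : (∫ t in (0:ℝ)..(u 0), (f t)^2) + ∫ t in (u 0)..(u 0 + δ), (f t)^2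
          = ∫ t in (0:ℝ)..(u 0 + δ), (f t)^2 :=
        intervalIntegral.integral_add_adjacent_intervals
          (hii 0 (u 0) le_rfl (hunn 0)) (hii (u 0) (u 0 + δ) (hunn 0) (by nlinarith [hunn 0]))
      have h3 : 0 ≤ ∫ t in (0:ℝ)..(u 0), (f t)^2 :=
        intervalIntegral.integral_nonneg (hunn 0) (fun τ _ => sq_nonneg _)
      push_cast
      linarith
    | succ N ih =>
      have hN1 : u N + δ ≤ u (N+1) := (hustep N).1
      have h1 := hblock (u (N+1)) (hunn (N+1)) (hustep N).2
      have ha0 : (0:ℝ) ≤ u N + δ := by nlinarith [hunn N]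
      have hb0 : (0:ℝ) ≤ u (N+1) := hunn (N+1)
      have h2 : (∫ t in (0:ℝ)..(u N + δ), (f t)^2) + ∫ t in (u N + δ)..(u (N+1)), (f t)^2
          = ∫ t in (0:ℝ)..(u (N+1)), (f t)^2 :=
        intervalIntegral.integral_add_adjacent_intervals
          (hii 0 (u N + δ) le_rfl ha0) (hii (u N + δ) (u (N+1)) ha0 hb0)
      have h3 : (∫ t in (0:ℝ)..(u (N+1)), (f t)^2) + ∫ t in (u (N+1))..(u (N+1) + δ), (f t)^2
          = ∫ t in (0:ℝ)..(u (N+1) + δ), (f t)^2 :=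
        intervalIntegral.integral_add_adjacent_intervals
          (hii 0 (u (N+1)) le_rfl hb0) (hii (u (N+1)) (u (N+1) + δ) hb0 (by nlinarith))
      have h4 : 0 ≤ ∫ t in (u N + δ)..(u (N+1)), (f t)^2 :=
        intervalIntegral.integral_nonneg hN1 (fun τ _ => sq_nonneg _)
      push_cast
      push_cast at ih
      linarith
  -- contradiction
  obtain ⟨N, hN⟩ := exists_nat_gt (K / (δ * (ε/2)^2))
  have hA : 0 < δ * (ε/2)^2 := by positivity
  have h1 := hcum N
  have h2 := hK (u N + δ) (by nlinarith [hunn N])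
  have h3 : K / (δ * (ε/2)^2) < (N:ℝ) + 1 := by linarith
  have h4 : K < (N+1 : ℝ) * (δ * (ε/2)^2) := by
    rw [div_lt_iff₀ hA] at h3
    linarith
  linarith

lemma inL2_of_intervalIntegral_bound (f : ℝ → ℝ) (K : ℝ)
    (hmeas : AEMeasurable f (volume.restrict (Set.Ici (0:ℝ))))
    (hint : ∀ T : ℝ, 0 ≤ T → IntervalIntegrable (fun t => (f t)^2) volume 0 T)
    (hK : ∀ T : ℝ, 0 ≤ T → ∫ t in (0:ℝ)..T, (f t)^2 ≤ K) :
    ∫⁻ t in Set.Ici (0:ℝ), ENNReal.ofReal ((f t)^2) < ⊤ := by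
  set μ0 := volume.restrict (Set.Ici (0:ℝ)) with hμ0
  set F : ℝ → ℝ≥0∞ := fun t => ENNReal.ofReal ((f t)^2) with hF
  have hFmeas : AEMeasurable F μ0 := by
    exact ENNReal.measurable_ofReal.comp_aemeasurable ((hmeas.mul hmeas).congr
      (by filter_upwards with t; rw [Pi.mul_apply]; ring))
  set g : ℕ → ℝ → ℝ≥0∞ := fun n t => Set.indicator (Set.Iic (n:ℝ)) F t with hg
  have hgmeas : ∀ n, AEMeasurable (g n) μ0 := fun n =>
    hFmeas.indicator measurableSet_Iic
  have hgmono : ∀ᵐ t ∂μ0, Monotone fun n => g n t := by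
    filter_upwards with t
    intro m n hmn
    exact Set.indicator_le_indicator_of_subset
      (Set.Iic_subset_Iic.2 (by exact_mod_cast hmn)) (fun _ => zero_le) t
  have hsup : ∀ t, (⨆ n, g n t) = F t := by
    intro t
    obtain ⟨n, hn⟩ := exists_nat_ge t
    apply le_antisymm
    · exact iSup_le fun m => Set.indicator_le_self _ _ t
    · exact le_iSup_of_le n (by rw [hg]; simp [Set.indicator_of_mem (Set.mem_Iic.2 hn)])
  have hmain : ∫⁻ t, F t ∂μ0 = ⨆ n, ∫⁻ t, g n t ∂μ0 := by
    rw [← lintegral_iSup' hgmeas hgmono]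
    exact lintegral_congr fun t => (hsup t).symm
  have hbound : ∀ n : ℕ, ∫⁻ t, g n t ∂μ0 ≤ ENNReal.ofReal K := by
    intro n
    have h1 : ∫⁻ t, g n t ∂μ0 = ∫⁻ t in Set.Iic (n:ℝ), F t ∂μ0 :=
      lintegral_indicator measurableSet_Iic F
    have h2 : μ0.restrict (Set.Iic (n:ℝ)) = volume.restrict (Set.Icc (0:ℝ) n) := by
      rw [hμ0, Measure.restrict_restrict measurableSet_Iic]
      rw [Set.Iic_inter_Ici]
    have hfi : IntegrableOn (fun t => (f t)^2) (Set.Icc (0:ℝ) n) volume :=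
      (integrableOn_Icc_iff_integrableOn_Ioc (by simp)).2 ((hint n (Nat.cast_nonneg n)).1)
    have h3 : ∫⁻ t in Set.Icc (0:ℝ) n, F t ∂volume
        = ENNReal.ofReal (∫ t in Set.Icc (0:ℝ) n, (f t)^2 ∂volume) :=
      (ofReal_integral_eq_lintegral_ofReal hfi
        (ae_of_all _ fun t => sq_nonneg (f t))).symm
    have h4 : (∫ t in Set.Icc (0:ℝ) n, (f t)^2 ∂volume) ≤ K := by
      rw [integral_Icc_eq_integral_Ioc,
        ← intervalIntegral.integral_of_le (Nat.cast_nonneg n)]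
      exact hK n (Nat.cast_nonneg n)
    rw [h1, h2, h3]
    exact ENNReal.ofReal_le_ofReal h4
  calc ∫⁻ t, F t ∂μ0 = ⨆ n, ∫⁻ t, g n t ∂μ0 := hmain
    _ ≤ ENNReal.ofReal K := iSup_le hbound
    _ < ⊤ := ENNReal.ofReal_lt_top

set_option maxHeartbeats 1000000 in
/-- first-order composite adaptation law.
The error dynamics `ṡ = -η s + Y(t)(â - a)` together with the composite adaptation law
`â̇ = -P Y(t)ᵀ (γ s + κ Y(t)(â - a))` with `P = Pᵀ > 0` and `γ, κ > 0` guarantees that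
all trajectories remain bounded, `s ∈ L² ∩ L∞`, `f̃ = Y(â - a) ∈ L²`, `s → 0` and `x → x_d`. -/
theorem composite_adaptation_linear
    {n p : ℕ}
    (x xd : ℝ → EuclideanSpace ℝ (Fin n))
    (s : ℝ → ℝ)
    (Y : ℝ → EuclideanSpace ℝ (Fin p))
    (a : EuclideanSpace ℝ (Fin p))
    (ahat : ℝ → EuclideanSpace ℝ (Fin p))
    (P : EuclideanSpace ℝ (Fin p) →L[ℝ] EuclideanSpace ℝ (Fin p))
    (η γ κ : ℝ)
    (hη : 0 < η) (hγ : 0 < γ) (hκ : 0 < κ)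
    -- P is symmetric positive definite
    (hPsym : ∀ v w : EuclideanSpace ℝ (Fin p), ⟪P v, w⟫ = ⟪v, P w⟫)
    (hPpos : ∀ v : EuclideanSpace ℝ (Fin p), v ≠ 0 → 0 < ⟪v, P v⟫)
    -- error dynamics ṡ = -η s + Y (â - a)
    (hs : ∀ t, 0 ≤ t → HasDerivAt s (-η * s t + ⟪Y t, ahat t - a⟫) t)
    -- composite adaptation law â̇ = -P Yᵀ (γ s + κ Y(â - a))
    (ha : ∀ t, 0 ≤ t →
      HasDerivAt ahat (-(P ((γ * s t + κ * ⟪Y t, ahat t - a⟫) • Y t))) t)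
    -- the regressor Y(x, t) is locally bounded in x uniformly in t
    (hYloc : ∀ R : ℝ, ∃ M : ℝ, ∀ t, 0 ≤ t → ‖x t‖ ≤ R → ‖Y t‖ ≤ M)
    -- boundedness of s implies boundedness of x
    (hsx : InLinf s → InLinf x)
    -- s → 0 implies x → x_d
    (hxd : Tendsto s atTop (nhds 0) →
      Tendsto (fun t => x t - xd t) atTop (nhds 0)) :
    InLinf x ∧ InLinf ahat ∧
    (InL2 s ∧ InLinf s) ∧
    InL2 (fun t => ⟪Y t, ahat t - a⟫) ∧
    Tendsto s atTop (nhds 0) ∧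
    Tendsto (fun t => x t - xd t) atTop (nhds 0) := by
  classical
  -- construct the inverse Q of P
  have hPinj : Function.Injective P := by
    intro v w hvw
    by_contra hne
    have h0 : P (v - w) = 0 := by rw [map_sub, hvw, sub_self]
    have h1 := hPpos (v - w) (sub_ne_zero.2 hne)
    rw [h0, inner_zero_right] at h1
    exact lt_irrefl _ h1
  have hbij : Function.Bijective (P : EuclideanSpace ℝ (Fin p) →ₗ[ℝ] EuclideanSpace ℝ (Fin p)) :=
    ⟨hPinj, (LinearMap.injective_iff_surjective_of_finrank_eq_finrank rfl).1 hPinj⟩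
  have _inst : True := trivial
  set e := LinearEquiv.ofBijective (P : EuclideanSpace ℝ (Fin p) →ₗ[ℝ] EuclideanSpace ℝ (Fin p)) hbij with he
  set Q : EuclideanSpace ℝ (Fin p) →L[ℝ] EuclideanSpace ℝ (Fin p) := LinearMap.toContinuousLinearMap (e.symm : EuclideanSpace ℝ (Fin p) →ₗ[ℝ] EuclideanSpace ℝ (Fin p)) with hQ
  have hPQ : ∀ v : EuclideanSpace ℝ (Fin p), P (Q v) = v := fun v => e.apply_symm_apply v
  have hQP : ∀ v : EuclideanSpace ℝ (Fin p), Q (P v) = v := fun v => e.symm_apply_apply v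
  have hQsym : ∀ v w : EuclideanSpace ℝ (Fin p), ⟪Q v, w⟫ = ⟪v, Q w⟫ := by
    intro v w
    conv_lhs => rw [← hPQ w]
    rw [← hPsym, hPQ]
  have hQpos : ∀ v : EuclideanSpace ℝ (Fin p), v ≠ 0 → 0 < ⟪v, Q v⟫ := by
    intro v hv
    have hQv : Q v ≠ 0 := by
      intro h0
      apply hv
      rw [← hPQ v, h0, map_zero]
    calc (0:ℝ) < ⟪Q v, P (Q v)⟫ := hPpos (Q v) hQv
      _ = ⟪P (Q v), Q v⟫ := real_inner_comm _ _
      _ = ⟪v, Q v⟫ := by rw [hPQ]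
  have hQnn : ∀ v : EuclideanSpace ℝ (Fin p), 0 ≤ ⟪v, Q v⟫ := by
    intro v
    rcases eq_or_ne v 0 with rfl | hv
    · simp
    · exact (hQpos v hv).le
  obtain ⟨μ, hμpos, hμle⟩ := posdef_lower_bound Q hQpos
  -- the Lyapunov function
  obtain ⟨w, hw⟩ : ∃ w : ℝ → ℝ, w = fun t => ⟪Y t, ahat t - a⟫ := ⟨_, rfl⟩
  obtain ⟨V, hV⟩ : ∃ V : ℝ → ℝ,
      V = fun t => γ/2 * (s t)^2 + 1/2 * ⟪ahat t - a, Q (ahat t - a)⟫ := ⟨_, rfl⟩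
  have hVd : ∀ t : ℝ, 0 ≤ t →
      HasDerivAt V (-(γ*η*(s t)^2) - κ * (w t)^2) t := by
    intro t ht
    simp only [hV, hw]
    have hs2 : HasDerivAt (fun τ => (s τ)^2)
        (2 * s t * (-η * s t + ⟪Y t, ahat t - a⟫)) t := by
      refine ((hs t ht).pow 2).congr_deriv ?_
      push_cast
      ring
    have hatl : HasDerivAt (fun τ => ahat τ - a)
        (-(P ((γ * s t + κ * ⟪Y t, ahat t - a⟫) • Y t))) t := (ha t ht).sub_const a
    have hQatl : HasDerivAt (fun τ => Q (ahat τ - a))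
        (Q (-(P ((γ * s t + κ * ⟪Y t, ahat t - a⟫) • Y t)))) t :=
      Q.hasFDerivAt.comp_hasDerivAt t hatl
    have hin : HasDerivAt (fun τ => ⟪ahat τ - a, Q (ahat τ - a)⟫)
        (⟪ahat t - a, Q (-(P ((γ * s t + κ * ⟪Y t, ahat t - a⟫) • Y t)))⟫ +
          ⟪(-(P ((γ * s t + κ * ⟪Y t, ahat t - a⟫) • Y t)) : EuclideanSpace ℝ (Fin p)),
            Q (ahat t - a)⟫) t :=
      HasDerivAt.inner ℝ hatl hQatl
    have key : ⟪(-(P ((γ * s t + κ * ⟪Y t, ahat t - a⟫) • Y t)) : EuclideanSpace ℝ (Fin p)),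
        Q (ahat t - a)⟫ = -((γ * s t + κ * ⟪Y t, ahat t - a⟫) * ⟪Y t, ahat t - a⟫) := by
      rw [inner_neg_left, hPsym, hPQ, real_inner_smul_left]
    have key2 : ⟪ahat t - a, Q (-(P ((γ * s t + κ * ⟪Y t, ahat t - a⟫) • Y t)))⟫
        = -((γ * s t + κ * ⟪Y t, ahat t - a⟫) * ⟪Y t, ahat t - a⟫) := by
      rw [real_inner_comm, hQsym, key]
    have hcomb := (hs2.const_mul (γ/2)).add (hin.const_mul (1/2))
    refine hcomb.congr_deriv ?_
    rw [key, key2]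
    ring
  have hscont : ContinuousOn s (Set.Ici (0:ℝ)) := fun t ht =>
    (hs t ht).continuousAt.continuousWithinAt
  have hVanti : AntitoneOn V (Set.Ici (0:ℝ)) := by
    apply antitoneOn_of_deriv_nonpos (convex_Ici 0)
    · intro t ht
      exact (hVd t ht).continuousAt.continuousWithinAt
    · intro t ht
      rw [interior_Ici] at ht
      exact (hVd t (le_of_lt ht)).differentiableAt.differentiableWithinAt
    · intro t ht
      rw [interior_Ici] at ht
      rw [(hVd t (le_of_lt ht)).deriv]
      have h1 : 0 ≤ γ * η * (s t)^2 := by positivity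
      have h2 : 0 ≤ κ * (w t)^2 := by positivity
      linarith
  have hVle : ∀ t : ℝ, 0 ≤ t → V t ≤ V 0 :=
    fun t ht => hVanti Set.self_mem_Ici ht ht
  have hVnn : ∀ t : ℝ, 0 ≤ V t := by
    intro t
    simp only [hV]
    have h1 := hQnn (ahat t - a)
    nlinarith [sq_nonneg (s t)]
  have hsB : ∀ t : ℝ, 0 ≤ t → |s t| ≤ Real.sqrt (2 * V 0 / γ) := by
    intro t ht
    have h1 : γ/2 * (s t)^2 ≤ V t := by
      simp only [hV]
      nlinarith [hQnn (ahat t - a)]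
    have h2 : (s t)^2 ≤ 2 * V 0 / γ := by
      rw [le_div_iff₀ hγ]
      nlinarith [hVle t ht]
    calc |s t| = Real.sqrt ((s t)^2) := (Real.sqrt_sq_eq_abs _).symm
      _ ≤ _ := Real.sqrt_le_sqrt h2
  have hsLinf : InLinf s :=
    ⟨Real.sqrt (2 * V 0 / γ), fun t ht => by rw [Real.norm_eq_abs]; exact hsB t ht⟩
  have hxLinf : InLinf x := hsx hsLinf
  obtain ⟨R, hR⟩ := hxLinf
  obtain ⟨M, hM⟩ := hYloc R
  have hYB : ∀ t : ℝ, 0 ≤ t → ‖Y t‖ ≤ M := fun t ht => hM t ht (hR t ht)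
  have hM0 : 0 ≤ M := le_trans (norm_nonneg (Y 0)) (hYB 0 le_rfl)
  have hatlB : ∀ t : ℝ, 0 ≤ t → ‖ahat t - a‖ ≤ Real.sqrt (2 * V 0 / μ) := by
    intro t ht
    have h1 : 1/2 * ⟪ahat t - a, Q (ahat t - a)⟫ ≤ V t := by
      simp only [hV]
      nlinarith [sq_nonneg (s t)]
    have h2 : μ * ‖ahat t - a‖^2 ≤ 2 * V 0 :=
      le_trans (hμle (ahat t - a)) (by nlinarith [hVle t ht])
    have h3 : ‖ahat t - a‖^2 ≤ 2 * V 0 / μ := by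
      rw [le_div_iff₀ hμpos]
      nlinarith
    calc ‖ahat t - a‖ = Real.sqrt (‖ahat t - a‖^2) :=
          (Real.sqrt_sq (norm_nonneg _)).symm
      _ ≤ _ := Real.sqrt_le_sqrt h3
  have hahatLinf : InLinf ahat := by
    refine ⟨Real.sqrt (2 * V 0 / μ) + ‖a‖, fun t ht => ?_⟩
    calc ‖ahat t‖ = ‖(ahat t - a) + a‖ := by rw [sub_add_cancel]
      _ ≤ ‖ahat t - a‖ + ‖a‖ := norm_add_le _ _
      _ ≤ _ := add_le_add_left (hatlB t ht) _
  have hwB : ∀ t : ℝ, 0 ≤ t → |w t| ≤ M * Real.sqrt (2 * V 0 / μ) := by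
    intro t ht
    simp only [hw]
    calc |⟪Y t, ahat t - a⟫| ≤ ‖Y t‖ * ‖ahat t - a‖ := abs_real_inner_le_norm _ _
      _ ≤ M * Real.sqrt (2 * V 0 / μ) :=
        mul_le_mul (hYB t ht) (hatlB t ht) (norm_nonneg _) hM0
  -- measurability
  have hsmeas : AEStronglyMeasurable s (volume.restrict (Set.Ici (0:ℝ))) :=
    hscont.aestronglyMeasurable measurableSet_Ici
  have hweq : ∀ t ∈ Set.Ici (0:ℝ), deriv s t + η * s t = w t := by
    intro t ht
    have h1 := (hs t ht).deriv
    simp only [hw]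
    rw [h1]
    ring
  have hwmeas : AEStronglyMeasurable w (volume.restrict (Set.Ici (0:ℝ))) := by
    have hg : AEStronglyMeasurable (fun t => deriv s t + η * s t)
        (volume.restrict (Set.Ici (0:ℝ))) :=
      (measurable_deriv s).aestronglyMeasurable.restrict.add (hsmeas.const_mul η)
    exact hg.congr ((ae_restrict_iff' measurableSet_Ici).2 (ae_of_all _ hweq))
  -- interval integrability
  have hs2ii : ∀ T : ℝ, 0 ≤ T → IntervalIntegrable (fun t => (s t)^2) volume 0 T := by
    intro T hT
    apply ContinuousOn.intervalIntegrable
    apply ContinuousOn.pow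
    apply hscont.mono
    rw [Set.uIcc_of_le hT]
    exact fun τ hτ => hτ.1
  have hw2ii : ∀ T : ℝ, 0 ≤ T → IntervalIntegrable (fun t => (w t)^2) volume 0 T := by
    intro T hT
    rw [intervalIntegrable_iff_integrableOn_Ioc_of_le hT]
    have hm : AEStronglyMeasurable w (volume.restrict (Set.Ioc (0:ℝ) T)) :=
      hwmeas.mono_measure (Measure.restrict_mono
        (show Set.Ioc (0:ℝ) T ⊆ Set.Ici 0 from fun t ht => le_of_lt ht.1) le_rfl)
    refine ⟨(hm.mul hm).congr (ae_of_all _ fun t => (pow_two (w t)).symm), ?_⟩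
    apply HasFiniteIntegral.restrict_of_bounded
      (C := (M * Real.sqrt (2 * V 0 / μ))^2) measure_Ioc_lt_top
    apply (ae_restrict_iff' measurableSet_Ioc).2 (ae_of_all _ ?_)
    intro t ht
    have h1 := hwB t ht.1.le
    rw [Real.norm_eq_abs, abs_of_nonneg (sq_nonneg _), ← sq_abs]
    exact pow_le_pow_left₀ (abs_nonneg _) h1 2
  -- FTC and integral bounds
  have hFTC : ∀ T : ℝ, 0 ≤ T →
      (∫ t in (0:ℝ)..T, (γ*η*(s t)^2 + κ*(w t)^2)) = V 0 - V T := by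
    intro T hT
    have hD : IntervalIntegrable (fun t => -(γ*η*(s t)^2) - κ*(w t)^2) volume 0 T :=
      (((hs2ii T hT).const_mul (γ*η)).neg).sub ((hw2ii T hT).const_mul κ)
    have h1 := intervalIntegral.integral_eq_sub_of_hasDerivAt
      (f := V) (f' := fun t => -(γ*η*(s t)^2) - κ*(w t)^2)
      (fun t ht' => hVd t (by rw [Set.uIcc_of_le hT] at ht'; exact ht'.1)) hD
    have h2 : (∫ t in (0:ℝ)..T, (γ*η*(s t)^2 + κ*(w t)^2))
        = -∫ t in (0:ℝ)..T, (-(γ*η*(s t)^2) - κ*(w t)^2) := by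
      rw [← intervalIntegral.integral_neg]
      congr 1
      funext τ
      ring
    rw [h2, h1]
    ring
  have hIadd : ∀ T : ℝ, 0 ≤ T →
      (∫ t in (0:ℝ)..T, (γ*η*(s t)^2 + κ*(w t)^2))
        = (∫ t in (0:ℝ)..T, γ*η*(s t)^2) + ∫ t in (0:ℝ)..T, κ*(w t)^2 := by
    intro T hT
    exact intervalIntegral.integral_add ((hs2ii T hT).const_mul (γ*η))
      ((hw2ii T hT).const_mul κ)
  have hs2K : ∀ T : ℝ, 0 ≤ T → ∫ t in (0:ℝ)..T, (s t)^2 ≤ V 0 / (γ*η) := by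
    intro T hT
    have h0 := hFTC T hT
    have hadd := hIadd T hT
    have hiw : 0 ≤ ∫ t in (0:ℝ)..T, κ*(w t)^2 :=
      intervalIntegral.integral_nonneg hT (fun τ _ => by positivity)
    have h1 : (∫ t in (0:ℝ)..T, γ*η*(s t)^2) ≤ V 0 := by
      have hVT := hVnn T
      linarith
    rw [intervalIntegral.integral_const_mul] at h1
    rw [le_div_iff₀ (mul_pos hγ hη)]
    rw [mul_comm] at h1
    exact h1
  have hw2K : ∀ T : ℝ, 0 ≤ T → ∫ t in (0:ℝ)..T, (w t)^2 ≤ V 0 / κ := by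
    intro T hT
    have h0 := hFTC T hT
    have hadd := hIadd T hT
    have his : 0 ≤ ∫ t in (0:ℝ)..T, γ*η*(s t)^2 :=
      intervalIntegral.integral_nonneg hT (fun τ _ => by positivity)
    have h1 : (∫ t in (0:ℝ)..T, κ*(w t)^2) ≤ V 0 := by
      have hVT := hVnn T
      linarith
    rw [intervalIntegral.integral_const_mul] at h1
    rw [le_div_iff₀ hκ]
    rw [mul_comm] at h1
    exact h1
  -- L² conclusions
  have hsL2 : InL2 s := by
    show (∫⁻ t in Set.Ici (0:ℝ), ENNReal.ofReal (‖s t‖^2)) < ⊤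
    have heq : (fun t => ENNReal.ofReal (‖s t‖^2))
        = fun t => ENNReal.ofReal ((s t)^2) := by
      funext t
      rw [Real.norm_eq_abs, sq_abs]
    rw [heq]
    exact inL2_of_intervalIntegral_bound s (V 0/(γ*η)) hsmeas.aemeasurable hs2ii hs2K
  have hwL2 : InL2 w := by
    show (∫⁻ t in Set.Ici (0:ℝ), ENNReal.ofReal (‖w t‖^2)) < ⊤
    have heq : (fun t => ENNReal.ofReal (‖w t‖^2))
        = fun t => ENNReal.ofReal ((w t)^2) := by
      funext t
      rw [Real.norm_eq_abs, sq_abs]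
    rw [heq]
    exact inL2_of_intervalIntegral_bound w (V 0/κ) hwmeas.aemeasurable hw2ii hw2K
  -- Barbalat: s → 0
  have hlip : ∀ a' b' : ℝ, 0 ≤ a' → 0 ≤ b' → |s b' - s a'| ≤
      (η * Real.sqrt (2 * V 0 / γ) + M * Real.sqrt (2 * V 0 / μ)) * |b' - a'| := by
    intro a' b' ha' hb'
    have hbound : ∀ t ∈ Set.Ici (0:ℝ), ‖-η * s t + w t‖ ≤
        η * Real.sqrt (2 * V 0 / γ) + M * Real.sqrt (2 * V 0 / μ) := by
      intro t ht
      have h1 := hsB t ht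
      have h2 := hwB t ht
      rw [Real.norm_eq_abs]
      calc |(-η) * s t + w t| ≤ |(-η) * s t| + |w t| := abs_add_le _ _
        _ = η * |s t| + |w t| := by rw [abs_mul, abs_neg, abs_of_pos hη]
        _ ≤ _ := add_le_add (mul_le_mul_of_nonneg_left h1 hη.le) h2
    have := Convex.norm_image_sub_le_of_norm_hasDerivWithin_le
      (f := s) (f' := fun t => -η * s t + w t)
      (fun t ht => by
        rw [hw]
        exact (hs t ht).hasDerivWithinAt) hbound (convex_Ici 0) ha' hb'
    simpa [Real.norm_eq_abs] using this
  have hstend : Tendsto s atTop (nhds 0) :=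
    sq_int_lipschitz_tendsto s
      (η * Real.sqrt (2 * V 0 / γ) + M * Real.sqrt (2 * V 0 / μ))
      (V 0/(γ*η)) hscont hlip hs2K
  rw [hw] at hwL2
  exact ⟨hsx hsLinf, hahatLinf, ⟨hsL2, hsLinf⟩, hwL2, hstend, hxd hstend⟩

end
end

section
/- Consider the linearly parameterized error dynamics ṡ = −η s + Y(t)(â − a) with η > 0, together with the higher-order composite adaptation law v̂̇ = −Y(t)ᵀ(γ s + κ Y(t)(â − a)), â̇ = β 𝒩(t)(v̂ − â), where 𝒩(t) = 1 + μ‖Y(t)‖², γ, κ, β > 0, and μ > (γ/β)(1/η + κ/γ). Then all trajectories (x, v̂, â) remain bounded, (v̂ − â) ∈ L², s ∈ L∞ ∩ L², f̃ = Y(â − a) ∈ L∞ ∩ L², s(t) → 0 as t → ∞, and x(t) → x_d(t). -/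
open MeasureTheory Filter
open scoped RealInnerProductSpace ENNReal

noncomputable section

lemma young_aux (a b d : ℝ) (hd : 0 < d) : 2*a*b ≤ d*a^2 + b^2/d := by
  rw [div_eq_mul_inv, ← mul_le_mul_iff_of_pos_right hd]
  have h := sq_nonneg (d*a - b)
  have : b^2 * d⁻¹ * d = b^2 := by field_simp
  nlinarith [sq_nonneg (d*a - b)]

lemma key_ineq (η γ κ β μ S Q E N P θ c : ℝ)
    (hη : 0 < η) (hγ : 0 < γ) (hκ : 0 < κ) (hβ : 0 < β)
    (hθpos : 0 < θ) (hid : γ/(θ*η) + κ/θ ≤ β*μ)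
    (hc1 : c ≤ (1-θ)*(γ*η)) (hc2 : c ≤ (1-θ)*κ) (hc3 : c ≤ β)
    (hP : |P| ≤ N*E) (hE : 0 ≤ E) (hN : 0 ≤ N) :
    -(γ*η)*S^2 - κ*Q^2 - 2*(γ*S+κ*Q)*P - β*E^2 - β*μ*(N^2*E^2)
      ≤ -c * (S^2+Q^2+E^2) := by
  have hNE : 0 ≤ N*E := mul_nonneg hN hE
  have h2 : 2 * |S| * (N*E) ≤ (θ*η)*S^2 + (N*E)^2/(θ*η) := by
    have := young_aux |S| (N*E) (θ*η) (mul_pos hθpos hη)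
    simpa [sq_abs] using this
  have h3 : 2 * |Q| * (N*E) ≤ θ*Q^2 + (N*E)^2/θ := by
    have := young_aux |Q| (N*E) θ hθpos
    simpa [sq_abs] using this
  have hcross : -(2*(γ*S+κ*Q)*P) ≤ γ*(2 * |S| * (N*E)) + κ*(2 * |Q| * (N*E)) := by
    have h4 : |γ*S+κ*Q| ≤ γ * |S| + κ * |Q| := by
      calc |γ*S+κ*Q| ≤ |γ*S| + |κ*Q| := abs_add_le _ _
        _ = γ * |S| + κ * |Q| := by rw [abs_mul, abs_mul, abs_of_pos hγ, abs_of_pos hκ]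
    have h5 : -(2*(γ*S+κ*Q)*P) ≤ 2 * |γ*S+κ*Q| * |P| := by
      calc -(2*(γ*S+κ*Q)*P) ≤ |2*(γ*S+κ*Q)*P| := neg_le_abs _
        _ = 2 * |γ*S+κ*Q| * |P| := by rw [abs_mul, abs_mul]; simp
    have h6 : 2 * |γ*S+κ*Q| * |P| ≤ 2*(γ * |S| + κ * |Q|)*(N*E) := by
      apply mul_le_mul (by linarith [abs_nonneg (γ*S+κ*Q)]) hP (abs_nonneg _)
      positivity
    nlinarith
  have hdiv : γ*((N*E)^2/(θ*η)) + κ*((N*E)^2/θ) ≤ β*μ*(N^2*E^2) := by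
    have h4 : γ*((N*E)^2/(θ*η)) + κ*((N*E)^2/θ) = (γ/(θ*η)+κ/θ)*(N*E)^2 := by ring
    have h5 : (γ/(θ*η)+κ/θ)*(N*E)^2 ≤ (β*μ)*(N*E)^2 :=
      mul_le_mul_of_nonneg_right hid (sq_nonneg _)
    rw [h4]
    calc (γ/(θ*η)+κ/θ)*(N*E)^2 ≤ (β*μ)*(N*E)^2 := h5
      _ = β*μ*(N^2*E^2) := by ring
  nlinarith [mul_le_mul_of_nonneg_right hc1 (sq_nonneg S),
    mul_le_mul_of_nonneg_right hc2 (sq_nonneg Q),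
    mul_le_mul_of_nonneg_right hc3 (sq_nonneg E),
    mul_le_mul_of_nonneg_left h2 hγ.le,
    mul_le_mul_of_nonneg_left h3 hκ.le]

set_option maxHeartbeats 1600000 in
/-- higher-order composite adaptation law.
The error dynamics `ṡ = -η s + Y(t)(â - a)` together with the higher-order composite law
`v̂̇ = -Y(t)ᵀ(γ s + κ Y(t)(â - a))`, `â̇ = β 𝒩(t)(v̂ - â)`, `𝒩(t) = 1 + μ‖Y(t)‖²`,
`μ > (γ/β)(1/η + κ/γ)`, guarantees that all trajectories remain bounded, `(v̂ - â) ∈ L²`,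
`s ∈ L∞ ∩ L²`, `f̃ = Y(â - a) ∈ L∞ ∩ L²`, `s → 0` and `x → x_d`. -/
theorem higher_order_composite_adaptation_linear
    {n p : ℕ}
    (x xd : ℝ → EuclideanSpace ℝ (Fin n))
    (s : ℝ → ℝ)
    (Y : ℝ → EuclideanSpace ℝ (Fin p))
    (a : EuclideanSpace ℝ (Fin p))
    (ahat vhat : ℝ → EuclideanSpace ℝ (Fin p))
    (η γ κ β μ : ℝ)
    (hη : 0 < η) (hγ : 0 < γ) (hκ : 0 < κ) (hβ : 0 < β)
    (hμ : (γ / β) * (1 / η + κ / γ) < μ)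
    -- error dynamics ṡ = -η s + Y (â - a)
    (hs : ∀ t, 0 ≤ t → HasDerivAt s (-η * s t + ⟪Y t, ahat t - a⟫) t)
    -- higher-order composite adaptation law
    (hv : ∀ t, 0 ≤ t →
      HasDerivAt vhat (-((γ * s t + κ * ⟪Y t, ahat t - a⟫) • Y t)) t)
    (ha : ∀ t, 0 ≤ t →
      HasDerivAt ahat ((β * (1 + μ * ‖Y t‖ ^ 2)) • (vhat t - ahat t)) t)
    -- the regressor Y(x, t) is locally bounded in x uniformly in t
    (hYloc : ∀ R : ℝ, ∃ M : ℝ, ∀ t, 0 ≤ t → ‖x t‖ ≤ R → ‖Y t‖ ≤ M)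
    -- boundedness of s implies boundedness of x
    (hsx : InLinf s → InLinf x)
    -- s → 0 implies x → x_d
    (hxd : Tendsto s atTop (nhds 0) →
      Tendsto (fun t => x t - xd t) atTop (nhds 0)) :
    InLinf x ∧ InLinf vhat ∧ InLinf ahat ∧
    InL2 (fun t => vhat t - ahat t) ∧
    (InLinf s ∧ InL2 s) ∧
    (InLinf (fun t => ⟪Y t, ahat t - a⟫) ∧ InL2 (fun t => ⟪Y t, ahat t - a⟫)) ∧
    Tendsto s atTop (nhds 0) ∧
    Tendsto (fun t => x t - xd t) atTop (nhds 0) := by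
  set q : ℝ → ℝ := fun t => ⟪Y t, ahat t - a⟫ with hqdef
  set e : ℝ → EuclideanSpace ℝ (Fin p) := fun t => vhat t - ahat t with hedef
  set w : ℝ → EuclideanSpace ℝ (Fin p) := fun t => vhat t - a with hwdef
  set V : ℝ → ℝ := fun u => γ/2 * (s u)^2 + 1/2 * ‖w u‖^2 + 1/2 * ‖e u‖^2 with hVdef
  set D : ℝ → ℝ := fun t => -(γ*η)*(s t)^2 - κ*(q t)^2 - 2*(γ*(s t)+κ*(q t))*(⟪Y t, e t⟫)
      - β*‖e t‖^2 - β*μ*(‖Y t‖^2*‖e t‖^2) with hDdef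
  -- derivative of the Lyapunov function
  have hVderiv : ∀ t, 0 ≤ t → HasDerivAt V (D t) t := by
    intro t ht
    have hw' : HasDerivAt w (-((γ * s t + κ * q t) • Y t)) t := (hv t ht).sub_const a
    have he' : HasDerivAt e ((-((γ * s t + κ * q t) • Y t)) - (β * (1 + μ * ‖Y t‖ ^ 2)) • e t) t :=
      (hv t ht).sub (ha t ht)
    have hcomb := ((((hs t ht).pow 2).const_mul (γ/2)).add ((hw'.norm_sq).const_mul (1/2))).add
      ((he'.norm_sq).const_mul (1/2))
    have heq : (γ/2) * (↑2 * s t ^ (2-1) * (-η * s t + q t))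
        + (1/2 * (2 * ⟪w t, -((γ * s t + κ * q t) • Y t)⟫))
        + (1/2 * (2 * ⟪e t, (-((γ * s t + κ * q t) • Y t)) - (β * (1 + μ * ‖Y t‖ ^ 2)) • e t⟫))
        = D t := by
      have hw2 : w t = (ahat t - a) + e t := by simp [hwdef, hedef]
      have hi1 : ⟪w t, -((γ * s t + κ * q t) • Y t)⟫
          = -((γ * s t + κ * q t) * (q t + ⟪Y t, e t⟫)) := by
        rw [inner_neg_right, real_inner_smul_right, hw2]
        rw [real_inner_comm, inner_add_right]
      have hi2 : ⟪e t, (-((γ * s t + κ * q t) • Y t)) - (β * (1 + μ * ‖Y t‖ ^ 2)) • e t⟫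
          = -((γ * s t + κ * q t) * ⟪Y t, e t⟫) - (β * (1 + μ * ‖Y t‖ ^ 2)) * ‖e t‖^2 := by
        rw [inner_sub_right, inner_neg_right, real_inner_smul_right, real_inner_smul_right,
          real_inner_self_eq_norm_sq, real_inner_comm]
      rw [hi1, hi2, hDdef]
      push_cast
      ring
    exact heq ▸ hcomb
  have hVcont : ContinuousOn V (Set.Ici 0) :=
    fun t ht => ((hVderiv t ht).continuousAt).continuousWithinAt
  have hconts : ContinuousOn s (Set.Ici 0) :=
    fun t ht => ((hs t ht).continuousAt).continuousWithinAt
  have hconte : ContinuousOn e (Set.Ici 0) :=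
    fun t ht => (((hv t ht).sub (ha t ht)).continuousAt).continuousWithinAt
  clear_value V D q e w
  -- constants
  have hβμ : γ/η + κ < β*μ := by
    have h1 : γ/η + κ = β*((γ/β)*(1/η + κ/γ)) := by field_simp
    rw [h1]
    exact mul_lt_mul_of_pos_left hμ hβ
  have hβμpos : 0 < β*μ := lt_trans (by positivity) hβμ
  set θ : ℝ := (γ/η + κ)/(β*μ) with hθdef
  have hθpos : 0 < θ := by positivity
  have hθlt1 : θ < 1 := (div_lt_one hβμpos).2 hβμ
  have hid : γ/(θ*η) + κ/θ ≤ β*μ := by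
    have hθne : θ ≠ 0 := ne_of_gt hθpos
    have hηne : η ≠ 0 := ne_of_gt hη
    have h0 : (γ/η + κ) ≠ 0 := ne_of_gt (by positivity)
    have h1 : (β*μ) ≠ 0 := ne_of_gt hβμpos
    have h2 : γ/(θ*η) + κ/θ = (γ/η + κ)/θ := by field_simp
    rw [h2, hθdef, div_div_eq_mul_div, mul_comm, mul_div_assoc, div_self h0, mul_one]
  set c : ℝ := min (min ((1-θ)*(γ*η)) ((1-θ)*κ)) β with hcdef
  have h1θ : 0 < 1 - θ := by linarith
  have hcpos : 0 < c :=
    lt_min (lt_min (mul_pos h1θ (mul_pos hγ hη)) (mul_pos h1θ hκ)) hβ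
  clear_value θ c
  -- the combined signal
  set gf : ℝ → ℝ := fun t => (s t)^2 + (q t)^2 + ‖e t‖^2 with hgfdef
  clear_value gf
  have hgnn : ∀ t, 0 ≤ gf t := by
    intro t
    simp only [hgfdef]
    positivity
  have hDle : ∀ t, D t ≤ -c * gf t := by
    intro t
    have hP : |(⟪Y t, e t⟫ : ℝ)| ≤ ‖Y t‖ * ‖e t‖ := abs_real_inner_le_norm _ _
    have hc1 : c ≤ (1-θ)*(γ*η) := by
      rw [hcdef]; exact le_trans (min_le_left _ _) (min_le_left _ _)
    have hc2 : c ≤ (1-θ)*κ := by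
      rw [hcdef]; exact le_trans (min_le_left _ _) (min_le_right _ _)
    have hc3 : c ≤ β := by rw [hcdef]; exact min_le_right _ _
    simp only [hDdef, hgfdef]
    exact key_ineq η γ κ β μ (s t) (q t) ‖e t‖ ‖Y t‖ (⟪Y t, e t⟫) θ c hη hγ hκ hβ hθpos hid
      hc1 hc2 hc3 hP (norm_nonneg _) (norm_nonneg _)
  -- V is nonincreasing and nonnegative
  have hVanti : AntitoneOn V (Set.Ici 0) := by
    apply antitoneOn_of_deriv_nonpos (convex_Ici 0) hVcont
    · intro t ht
      rw [interior_Ici] at ht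
      exact ((hVderiv t ht.le).differentiableAt).differentiableWithinAt
    · intro t ht
      rw [interior_Ici] at ht
      rw [(hVderiv t ht.le).deriv]
      calc D t ≤ -c * gf t := hDle t
        _ ≤ 0 := by
          have h1 : 0 ≤ c * gf t := mul_nonneg hcpos.le (hgnn t)
          linarith
  have hVnonneg : ∀ t, 0 ≤ V t := by
    intro t
    have h1 : 0 ≤ γ/2 * (s t)^2 := mul_nonneg (by linarith) (sq_nonneg _)
    have h2 : 0 ≤ 1/2 * ‖w t‖^2 := by positivity
    have h3 : 0 ≤ 1/2 * ‖e t‖^2 := by positivity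
    simp only [hVdef]
    linarith
  set V0 : ℝ := V 0 with hV0def
  have hVle : ∀ t, 0 ≤ t → V t ≤ V0 := fun t ht => hVanti Set.self_mem_Ici ht ht
  have hV0nn : 0 ≤ V0 := hVnonneg 0
  clear_value V0
  -- pointwise bounds
  set Cs : ℝ := Real.sqrt (2*V0/γ) with hCsdef
  set Cw : ℝ := Real.sqrt (2*V0) with hCwdef
  have hCs0 : 0 ≤ Cs := Real.sqrt_nonneg _
  have hCw0 : 0 ≤ Cw := Real.sqrt_nonneg _
  have hsabs : ∀ t, 0 ≤ t → |s t| ≤ Cs := by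
    intro t ht
    have h1 : (s t)^2 ≤ 2*V0/γ := by
      rw [le_div_iff₀ hγ]
      have h2 := hVle t ht
      have h3 : 0 ≤ 1/2 * ‖w t‖^2 := by positivity
      have h4 : 0 ≤ 1/2 * ‖e t‖^2 := by positivity
      simp only [hVdef] at h2
      linarith
    calc |s t| = Real.sqrt ((s t)^2) := (Real.sqrt_sq_eq_abs _).symm
      _ ≤ Cs := Real.sqrt_le_sqrt h1
  have hwabs : ∀ t, 0 ≤ t → ‖w t‖ ≤ Cw := by
    intro t ht
    have h1 : ‖w t‖^2 ≤ 2*V0 := by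
      have h2 := hVle t ht
      have h3 : 0 ≤ γ/2 * (s t)^2 := mul_nonneg (by linarith) (sq_nonneg _)
      have h4 : 0 ≤ 1/2 * ‖e t‖^2 := by positivity
      simp only [hVdef] at h2
      linarith
    calc ‖w t‖ = Real.sqrt (‖w t‖^2) := (Real.sqrt_sq (norm_nonneg _)).symm
      _ ≤ Cw := Real.sqrt_le_sqrt h1
  have heabs : ∀ t, 0 ≤ t → ‖e t‖ ≤ Cw := by
    intro t ht
    have h1 : ‖e t‖^2 ≤ 2*V0 := by
      have h2 := hVle t ht
      have h3 : 0 ≤ γ/2 * (s t)^2 := mul_nonneg (by linarith) (sq_nonneg _)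
      have h4 : 0 ≤ 1/2 * ‖w t‖^2 := by positivity
      simp only [hVdef] at h2
      linarith
    calc ‖e t‖ = Real.sqrt (‖e t‖^2) := (Real.sqrt_sq (norm_nonneg _)).symm
      _ ≤ Cw := Real.sqrt_le_sqrt h1
  clear_value Cs Cw
  have hsinf : InLinf s := ⟨Cs, fun t ht => by rw [Real.norm_eq_abs]; exact hsabs t ht⟩
  have hxinf : InLinf x := hsx hsinf
  obtain ⟨R, hR⟩ := hxinf
  obtain ⟨M, hM⟩ := hYloc R
  have hMb : ∀ t, 0 ≤ t → ‖Y t‖ ≤ M := fun t ht => hM t ht (hR t ht)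
  have hM0 : 0 ≤ M := le_trans (norm_nonneg _) (hMb 0 le_rfl)
  have haeq : ∀ t, ahat t - a = w t - e t := by
    intro t; simp only [hwdef, hedef]; abel
  have hab : ∀ t, 0 ≤ t → ‖ahat t - a‖ ≤ Cw + Cw := by
    intro t ht
    rw [haeq t]
    exact le_trans (norm_sub_le _ _) (add_le_add (hwabs t ht) (heabs t ht))
  set Cq : ℝ := M * (Cw + Cw) with hCqdef
  have hCq0 : 0 ≤ Cq := mul_nonneg hM0 (by linarith)
  have hqabs : ∀ t, 0 ≤ t → |q t| ≤ Cq := by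
    intro t ht
    simp only [hqdef]
    calc |(⟪Y t, ahat t - a⟫ : ℝ)| ≤ ‖Y t‖ * ‖ahat t - a‖ := abs_real_inner_le_norm _ _
      _ ≤ M * (Cw + Cw) := mul_le_mul (hMb t ht) (hab t ht) (norm_nonneg _) hM0
  clear_value Cq
  have hqinf : InLinf q := ⟨Cq, fun t ht => by rw [Real.norm_eq_abs]; exact hqabs t ht⟩
  have hvinf : InLinf vhat := by
    refine ⟨Cw + ‖a‖, fun t ht => ?_⟩
    have h1 : vhat t = w t + a := by simp [hwdef]
    rw [h1]
    exact le_trans (norm_add_le _ _) (add_le_add_left (hwabs t ht) _)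
  have hainf : InLinf ahat := by
    refine ⟨(Cw + Cw) + ‖a‖, fun t ht => ?_⟩
    have h1 : ahat t = (ahat t - a) + a := by abel
    rw [h1]
    exact le_trans (norm_add_le _ _) (add_le_add_left (hab t ht) _)
  -- measurability
  have haems : AEMeasurable s (volume.restrict (Set.Ici 0)) :=
    hconts.aemeasurable measurableSet_Ici
  have haeme : AEMeasurable e (volume.restrict (Set.Ici 0)) :=
    hconte.aemeasurable measurableSet_Ici
  have haemq : AEMeasurable q (volume.restrict (Set.Ici 0)) := by
    have hmd : Measurable (deriv s) := measurable_deriv s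
    have h1 : AEMeasurable (fun t => deriv s t + η * s t) (volume.restrict (Set.Ici 0)) :=
      (hmd.aemeasurable).add (haems.const_mul η)
    apply h1.congr
    filter_upwards [ae_restrict_mem measurableSet_Ici] with t ht
    rw [(hs t ht).deriv]
    simp only [hqdef]
    ring
  have haemg : AEMeasurable gf (volume.restrict (Set.Ici 0)) := by
    have h1 : AEMeasurable (fun t => s t * s t + q t * q t + ‖e t‖ * ‖e t‖)
        (volume.restrict (Set.Ici 0)) :=
      ((haems.mul haems).add (haemq.mul haemq)).add (haeme.norm.mul haeme.norm)
    apply h1.congr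
    apply Filter.Eventually.of_forall
    intro t
    simp only [hgfdef]
    ring
  set B : ℝ := Cs^2 + Cq^2 + Cw^2 with hBdef
  clear_value B
  have hgb : ∀ t, 0 ≤ t → gf t ≤ B := by
    intro t ht
    have h1 : (s t)^2 ≤ Cs^2 := by
      rw [← sq_abs (s t)]; exact pow_le_pow_left₀ (abs_nonneg _) (hsabs t ht) 2
    have h2 : (q t)^2 ≤ Cq^2 := by
      rw [← sq_abs (q t)]; exact pow_le_pow_left₀ (abs_nonneg _) (hqabs t ht) 2
    have h3 : ‖e t‖^2 ≤ Cw^2 := pow_le_pow_left₀ (norm_nonneg _) (heabs t ht) 2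
    simp only [hgfdef, hBdef]
    linarith
  have hgint : ∀ T : ℝ, IntegrableOn gf (Set.Icc 0 T) := by
    intro T
    have hsub : volume.restrict (Set.Icc (0:ℝ) T) ≤ volume.restrict (Set.Ici 0) :=
      Measure.restrict_mono (fun u hu => hu.1) le_rfl
    refine ⟨((haemg.mono_measure hsub)).aestronglyMeasurable, ?_⟩
    apply HasFiniteIntegral.of_bounded (C := B)
    filter_upwards [ae_restrict_mem measurableSet_Icc] with t ht
    rw [Real.norm_eq_abs, abs_of_nonneg (hgnn t)]
    exact hgb t ht.1
  -- integral bound from the Lyapunov decrease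
  have hIb : ∀ T, 0 ≤ T → ∫ t in Set.Icc 0 T, gf t ≤ V0/c := by
    intro T hT
    have hφint : IntegrableOn (fun t => c * gf t) (Set.Icc 0 T) := (hgint T).const_mul c
    have h1 : (∫ y in (0:ℝ)..T, c * gf y) ≤ (fun u => -V u) T - (fun u => -V u) 0 := by
      apply intervalIntegral.integral_le_sub_of_hasDeriv_right_of_le hT
        ((hVcont.mono Set.Icc_subset_Ici_self).neg)
        (g' := fun u => -(D u)) ?_ hφint ?_
      · intro z hz
        exact ((hVderiv z hz.1.le).neg).hasDerivWithinAt
      · intro z hz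
        have h2 := hDle z
        linarith
    rw [intervalIntegral.integral_of_le hT] at h1
    have h2 : ∫ t in Set.Ioc 0 T, c * gf t = c * ∫ t in Set.Ioc 0 T, gf t :=
      MeasureTheory.integral_const_mul c gf
    rw [h2] at h1
    simp only at h1
    rw [MeasureTheory.integral_Icc_eq_integral_Ioc, le_div_iff₀ hcpos]
    have h3 := hVnonneg T
    linarith [h1, hV0def]
  -- L² bound on gf
  have haem_ofReal : AEMeasurable (fun t => ENNReal.ofReal (gf t)) (volume.restrict (Set.Ici 0)) :=
    ENNReal.measurable_ofReal.comp_aemeasurable haemg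
  set Fn : ℕ → ℝ → ℝ≥0∞ :=
    fun n => (Set.Icc (0:ℝ) (n:ℝ)).indicator (fun t => ENNReal.ofReal (gf t)) with hFndef
  clear_value Fn
  have hFnmeas : ∀ n : ℕ, AEMeasurable (Fn n) volume := by
    intro n
    simp only [hFndef]
    rw [aemeasurable_indicator_iff measurableSet_Icc]
    exact haem_ofReal.mono_measure (Measure.restrict_mono (fun u hu => hu.1) le_rfl)
  have hFnmono : ∀ t : ℝ, Monotone fun n => Fn n t := by
    intro t n m hnm
    simp only [hFndef]
    exact Set.indicator_le_indicator_of_subset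
      (Set.Icc_subset_Icc le_rfl (by exact_mod_cast hnm)) (fun u => zero_le) t
  have hFnsup : ∀ t : ℝ, (⨆ n, Fn n t)
      = (Set.Ici (0:ℝ)).indicator (fun u => ENNReal.ofReal (gf u)) t := by
    intro t
    by_cases ht : (0:ℝ) ≤ t
    · rw [Set.indicator_of_mem (show t ∈ Set.Ici (0:ℝ) from ht)]
      apply le_antisymm
      · apply iSup_le
        intro m
        by_cases htm : t ∈ Set.Icc (0:ℝ) (m:ℝ)
        · simp only [hFndef]; rw [Set.indicator_of_mem htm]
        · simp only [hFndef]; rw [Set.indicator_of_notMem htm]; exact zero_le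
      · have htmem : t ∈ Set.Icc (0:ℝ) ((⌈t⌉₊ : ℕ):ℝ) := ⟨ht, Nat.le_ceil t⟩
        calc ENNReal.ofReal (gf t) = Fn ⌈t⌉₊ t := by
              simp only [hFndef]; rw [Set.indicator_of_mem htmem]
          _ ≤ ⨆ n, Fn n t := le_iSup (fun n => Fn n t) ⌈t⌉₊
    · rw [Set.indicator_of_notMem (show t ∉ Set.Ici (0:ℝ) from ht)]
      apply le_antisymm _ zero_le
      apply iSup_le
      intro m
      simp only [hFndef]
      rw [Set.indicator_of_notMem (fun h => ht h.1)]
  have hlint : (∫⁻ t in Set.Ici (0:ℝ), ENNReal.ofReal (gf t)) ≤ ENNReal.ofReal (V0/c) := by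
    rw [← lintegral_indicator measurableSet_Ici]
    have h0 : (fun t => (Set.Ici (0:ℝ)).indicator (fun u => ENNReal.ofReal (gf u)) t)
        = fun t => ⨆ n, Fn n t := by
      funext t; rw [hFnsup]
    rw [h0, lintegral_iSup' hFnmeas (Filter.Eventually.of_forall hFnmono)]
    apply iSup_le
    intro m
    simp only [hFndef]
    rw [lintegral_indicator measurableSet_Icc]
    rw [← ofReal_integral_eq_lintegral_ofReal (hgint (m:ℝ))
      (Filter.Eventually.of_forall hgnn)]
    exact ENNReal.ofReal_le_ofReal (hIb (m:ℝ) (Nat.cast_nonneg m))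
  -- the three L² conclusions
  have hL2e : InL2 e := by
    unfold InL2
    refine lt_of_le_of_lt (le_trans (lintegral_mono fun t => ?_) hlint) ENNReal.ofReal_lt_top
    apply ENNReal.ofReal_le_ofReal
    simp only [hgfdef]
    linarith [sq_nonneg (s t), sq_nonneg (q t)]
  have hL2s : InL2 s := by
    unfold InL2
    refine lt_of_le_of_lt (le_trans (lintegral_mono fun t => ?_) hlint) ENNReal.ofReal_lt_top
    apply ENNReal.ofReal_le_ofReal
    rw [Real.norm_eq_abs, sq_abs]
    simp only [hgfdef]
    linarith [sq_nonneg (q t), sq_nonneg ‖e t‖]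
  have hL2q : InL2 q := by
    unfold InL2
    refine lt_of_le_of_lt (le_trans (lintegral_mono fun t => ?_) hlint) ENNReal.ofReal_lt_top
    apply ENNReal.ofReal_le_ofReal
    rw [Real.norm_eq_abs, sq_abs]
    simp only [hgfdef]
    linarith [sq_nonneg (s t), sq_nonneg ‖e t‖]
  -- Barbalat-type argument : s → 0
  have hs2ii : ∀ T₁ T₂ : ℝ, 0 ≤ T₁ → 0 ≤ T₂ →
      IntervalIntegrable (fun u => (s u)^2) volume T₁ T₂ := by
    intro T₁ T₂ h1 h2
    apply ContinuousOn.intervalIntegrable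
    apply (hconts.pow 2).mono
    intro u hu
    rcases Set.mem_uIcc.mp hu with ⟨h, _⟩ | ⟨h, _⟩
    · exact le_trans h1 h
    · exact le_trans h2 h
  set F : ℝ → ℝ := fun T => ∫ u in (0:ℝ)..T, (s u)^2 with hFdef
  clear_value F
  have hFadd : ∀ T₁ T₂ : ℝ, 0 ≤ T₁ → T₁ ≤ T₂ →
      F T₂ = F T₁ + ∫ u in T₁..T₂, (s u)^2 := by
    intro T₁ T₂ h1 h12
    simp only [hFdef]
    exact (intervalIntegral.integral_add_adjacent_intervals
      (hs2ii 0 T₁ le_rfl h1) (hs2ii T₁ T₂ h1 (h1.trans h12))).symm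
  have hFmono : ∀ T₁ T₂ : ℝ, 0 ≤ T₁ → T₁ ≤ T₂ → F T₁ ≤ F T₂ := by
    intro T₁ T₂ h1 h12
    have h2 := hFadd T₁ T₂ h1 h12
    have h3 : 0 ≤ ∫ u in T₁..T₂, (s u)^2 :=
      intervalIntegral.integral_nonneg h12 (fun u _ => sq_nonneg _)
    linarith
  have hFbdd : ∀ T, 0 ≤ T → F T ≤ V0/c := by
    intro T hT
    have hgii : IntervalIntegrable gf volume 0 T := by
      rw [intervalIntegrable_iff_integrableOn_Icc_of_le hT]
      exact hgint T
    have h1 : F T ≤ ∫ u in (0:ℝ)..T, gf u := by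
      simp only [hFdef]
      apply intervalIntegral.integral_mono_on hT (hs2ii 0 T le_rfl hT) hgii
      intro u hu
      simp only [hgfdef]
      linarith [sq_nonneg (q u), sq_nonneg ‖e u‖]
    have h2 : ∫ u in (0:ℝ)..T, gf u ≤ V0/c := by
      rw [intervalIntegral.integral_of_le hT, ← MeasureTheory.integral_Icc_eq_integral_Ioc]
      exact hIb T hT
    linarith
  have htends : Tendsto s atTop (nhds 0) := by
    rw [Metric.tendsto_atTop]
    intro ε hε
    set K : ℝ := η*Cs + Cq + 1 with hKdef
    clear_value K
    have hKpos : 0 < K := by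
      rw [hKdef]
      linarith [mul_nonneg hη.le hCs0, hCq0]
    set l : ℝ := min (ε/(2*K)) 1 with hldef
    clear_value l
    have hlpos : 0 < l := by
      rw [hldef]
      exact lt_min (div_pos hε (by linarith)) one_pos
    have hlK : K * l ≤ ε/2 := by
      have h1 : l ≤ ε/(2*K) := by rw [hldef]; exact min_le_left _ _
      calc K * l ≤ K * (ε/(2*K)) := mul_le_mul_of_nonneg_left h1 hKpos.le
        _ = ε/2 := by field_simp
    set δ : ℝ := (ε/2)^2 * l with hδdef
    clear_value δ
    have hδpos : 0 < δ := by
      rw [hδdef]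
      exact mul_pos (pow_pos (by linarith) 2) hlpos
    have hne : (F '' Set.Ici (0:ℝ)).Nonempty := ⟨F 0, 0, Set.self_mem_Ici, rfl⟩
    have hbdd : BddAbove (F '' Set.Ici (0:ℝ)) := by
      refine ⟨V0/c, ?_⟩
      rintro y ⟨T, hT, rfl⟩
      exact hFbdd T hT
    set L : ℝ := sSup (F '' Set.Ici (0:ℝ)) with hLdef
    obtain ⟨y, ⟨T, hT, rfl⟩, hyL⟩ := exists_lt_of_lt_csSup hne (show L - δ < L by linarith)
    refine ⟨T, fun t ht' => ?_⟩
    rw [Real.dist_eq, sub_zero]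
    by_contra hcon
    push_neg at hcon
    have ht0 : 0 ≤ t := hT.trans ht'
    have hsl : ∀ u, u ∈ Set.Icc t (t+l) → ε/2 ≤ |s u| := by
      intro u hu
      have hmvt : ‖s u - s t‖ ≤ K * ‖u - t‖ := by
        apply Convex.norm_image_sub_le_of_norm_hasDerivWithin_le
          (f' := fun v => -η * s v + ⟪Y v, ahat v - a⟫) (s := Set.Icc t (t+l)) ?_ ?_
          (convex_Icc _ _) (Set.left_mem_Icc.2 (by linarith)) hu
        · intro v hv
          exact (hs v (ht0.trans hv.1)).hasDerivWithinAt
        · intro v hv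
          have hv0 : 0 ≤ v := ht0.trans hv.1
          rw [Real.norm_eq_abs]
          have hqv : (⟪Y v, ahat v - a⟫ : ℝ) = q v := by rw [hqdef]
          rw [hqv]
          have h1 : |(-η * s v + q v)| ≤ |(-η * s v)| + |q v| := abs_add_le _ _
          have h2 : |(-η * s v)| = η * |s v| := by
            rw [abs_mul, abs_neg, abs_of_pos hη]
          have h3 : η * |s v| ≤ η * Cs := mul_le_mul_of_nonneg_left (hsabs v hv0) hη.le
          have h4 := hqabs v hv0
          linarith
      have habs : |s u - s t| ≤ ε/2 := by
        rw [Real.norm_eq_abs, Real.norm_eq_abs] at hmvt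
        have h2 : |u - t| = u - t := abs_of_nonneg (by linarith [hu.1])
        rw [h2] at hmvt
        have h5 : K * (u - t) ≤ K * l := mul_le_mul_of_nonneg_left (by linarith [hu.2]) hKpos.le
        linarith
      have h6 := abs_sub_abs_le_abs_sub (s t) (s u)
      rw [abs_sub_comm (s t) (s u)] at h6
      linarith
    have hFint : δ ≤ F (t+l) - F t := by
      have hadd := hFadd t (t+l) ht0 (by linarith)
      have hconstint : (∫ _ in t..(t+l), (ε/2)^2) ≤ ∫ u in t..(t+l), (s u)^2 := by
        apply intervalIntegral.integral_mono_on (by linarith) intervalIntegrable_const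
          (hs2ii t (t+l) ht0 (by linarith))
        intro u hu
        have h3 := hsl u hu
        calc (ε/2)^2 ≤ |s u|^2 := pow_le_pow_left₀ (by positivity) h3 2
          _ = (s u)^2 := sq_abs _
      rw [intervalIntegral.integral_const] at hconstint
      have h7 : (t + l - t) • ((ε/2)^2) = δ := by
        rw [smul_eq_mul, hδdef]; ring
      rw [h7] at hconstint
      linarith
    have h5 : F T ≤ F t := hFmono T t hT ht'
    have h6 : F (t+l) ≤ L := le_csSup hbdd ⟨t+l, Set.mem_Ici.2 (by linarith), rfl⟩
    clear_value L
    linarith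
  exact ⟨⟨R, hR⟩, hvinf, hainf, hL2e, ⟨hsinf, hL2s⟩, ⟨hqinf, hL2q⟩, htends, hxd htends⟩
end
end
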